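/- arXiv:2105.08029 — 4 statements merged into one kernel-verified Lean document; each statement's English description precedes it below -/
import Mathlib

section
/- Let 1 < p < ∞, let ω be a radial weight, and let ν : [0,1) → (0,∞) be a measurable function with ν ∈ L¹_ω([0,1)). If there is a constant C > 0 such that ‖M_{ω₁,rad}(f)‖_{L^p_{ων}} ≤ C ‖f‖_{L^p_{ων}} for every f ∈ L^p_{ων}, then A_p(ω,ων) ≤ C. -/
open MeasureTheory Set Metric
open scoped ENNReal NNReal

noncomputable section

/-- `ω̂(r) = ∫_r^1 ω(s) ds`. -/
def hatw (w : ℝ → ℝ) (r : ℝ) : ℝ := ∫ s in Set.Ioo r 1, w s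

/-- `ω̂₁(r) = ∫_r^1 s ω(s) ds`. -/
def hat1 (w : ℝ → ℝ) (r : ℝ) : ℝ := ∫ s in Set.Ioo r 1, s * w s

/-- A radial weight: nonnegative, integrable on `[0,1)`, with `ω̂(r) > 0` for `0 ≤ r < 1`. -/
def IsRadialWeight (w : ℝ → ℝ) : Prop :=
  (∀ r ∈ Set.Ico (0:ℝ) 1, 0 ≤ w r) ∧ MeasureTheory.IntegrableOn w (Set.Ico (0:ℝ) 1) ∧
    ∀ r ∈ Set.Ico (0:ℝ) 1, 0 < hatw w r

/-- The `L^p_ν` norm (with `dA` = area measure divided by `π`) of a real-valued function on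
the unit disc. -/
def LpR (p : ℝ) (v : ℝ → ℝ) (f : ℂ → ℝ) : ℝ≥0∞ :=
  ((∫⁻ z in Metric.ball (0:ℂ) 1, ENNReal.ofReal (|f z| ^ p * v ‖z‖)) /
    ENNReal.ofReal Real.pi) ^ (1 / p)

/-- The `L^p_ν` norm of an `ℝ≥0∞`-valued function on the unit disc. -/
def LpE (p : ℝ) (v : ℝ → ℝ) (g : ℂ → ℝ≥0∞) : ℝ≥0∞ :=
  ((∫⁻ z in Metric.ball (0:ℂ) 1, g z ^ p * ENNReal.ofReal (v ‖z‖)) /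
    ENNReal.ofReal Real.pi) ^ (1 / p)

/-- The averaging operator `H_ω(f)(z) = (1/ω̂₁(|z|)) ∫_{|z|}^1 f(s z/|z|) s ω(s) ds`. -/
def HE (w : ℝ → ℝ) (f : ℂ → ℝ) (z : ℂ) : ℝ≥0∞ :=
  (∫⁻ s in Set.Ioo ‖z‖ 1, ENNReal.ofReal (f ((s / ‖z‖) • z) * (s * w s))) /
    ENNReal.ofReal (hat1 w ‖z‖)

/-- The adjoint `H*_ω(f)(z) = ∫_0^{|z|} f(s z/|z|) s ω(s)/ω̂₁(s) ds`. -/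
def HstarE (w : ℝ → ℝ) (f : ℂ → ℝ) (z : ℂ) : ℝ≥0∞ :=
  ∫⁻ s in Set.Ioo 0 ‖z‖,
    ENNReal.ofReal (f ((s / ‖z‖) • z) * (s * w s)) / ENNReal.ofReal (hat1 w s)

/-- The Stieltjes-type operator
`S_{ω₁,rad}(f)(z) = ∫_0^1 f(s z/|z|) s ω(s)/(ω̂₁(s)+ω̂₁(|z|)) ds`. -/
def SE (w : ℝ → ℝ) (f : ℂ → ℝ) (z : ℂ) : ℝ≥0∞ :=
  ∫⁻ s in Set.Ioo (0:ℝ) 1,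
    ENNReal.ofReal (f ((s / ‖z‖) • z) * (s * w s)) /
      ENNReal.ofReal (hat1 w s + hat1 w ‖z‖)

/-- The Hörmander-type maximal function
`M_{ω₁,rad}(f)(z) = sup_{0 ≤ b < |z|} (1/ω̂₁(b)) ∫_b^1 |f(s z/|z|)| s ω(s) ds`. -/
def MradE (w : ℝ → ℝ) (f : ℂ → ℝ) (z : ℂ) : ℝ≥0∞ :=
  ⨆ b ∈ Set.Ico (0:ℝ) ‖z‖,
    (∫⁻ s in Set.Ioo b 1, ENNReal.ofReal (|f ((s / ‖z‖) • z)| * (s * w s))) /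
      ENNReal.ofReal (hat1 w b)

/-- `A_p(ω,ων) = sup_{0≤r<1} (∫_r¹ s ω ν)^{1/p} (∫_r¹ s ω ν^{-p'/p})^{1/p'} / ω̂₁(r)`,
for a positive function `ν` (note `p' = p/(p-1)` and `1/p' = 1 - 1/p`). -/
def Ap2 (p : ℝ) (w v : ℝ → ℝ) : ℝ≥0∞ :=
  ⨆ r ∈ Set.Ico (0:ℝ) 1,
    (∫⁻ s in Set.Ioo r 1, ENNReal.ofReal (s * w s * v s)) ^ (1 / p) *
      (∫⁻ s in Set.Ioo r 1,
        ENNReal.ofReal (s * w s * v s ^ (-(p / (p - 1)) / p))) ^ (1 - 1 / p) /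
      ENNReal.ofReal (hat1 w r)

open Measure in
lemma lintegral_ball_radial (g : ℝ → ℝ≥0∞) (hg : Measurable g) :
    ∫⁻ z in Metric.ball (0:ℂ) 1, g ‖z‖ =
      2 * ENNReal.ofReal Real.pi * ∫⁻ s in Set.Ioo (0:ℝ) 1, ENNReal.ofReal s * g s := by
  classical
  set G : ℝ → ℝ≥0∞ := (Set.Iio (1:ℝ)).indicator g with hG
  have hGm : Measurable G := hg.indicator measurableSet_Iio
  have h1 : ∫⁻ z in Metric.ball (0:ℂ) 1, g ‖z‖ = ∫⁻ z : ℂ, G ‖z‖ := by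
    rw [← lintegral_indicator measurableSet_ball]
    refine lintegral_congr fun z => ?_
    by_cases hz : ‖z‖ < 1
    · simp [hG, Set.indicator_apply, hz, mem_ball_zero_iff]
    · simp [hG, Set.indicator_apply, hz, mem_ball_zero_iff]
  have h2 : ∫⁻ z : ℂ, G ‖z‖
      = ∫⁻ z : ({0}ᶜ : Set ℂ), G ‖z.1‖ ∂((volume : Measure ℂ).comap Subtype.val) := by
    rw [lintegral_subtype_comap (measurableSet_singleton (0:ℂ)).compl
      (fun z : ℂ => G ‖z‖), restrict_compl_singleton]
  have h3 := (volume : Measure ℂ).measurePreserving_homeomorphUnitSphereProd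
  have hdim : Module.finrank ℝ ℂ = 2 := Complex.finrank_real_complex
  have h4 : ∫⁻ z : ({0}ᶜ : Set ℂ), G ‖z.1‖ ∂((volume : Measure ℂ).comap Subtype.val)
      = ∫⁻ x : (sphere (0:ℂ) 1 × Set.Ioi (0:ℝ)), G x.2.1
          ∂((volume : Measure ℂ).toSphere.prod
            (Measure.volumeIoiPow (Module.finrank ℝ ℂ - 1))) := by
    rw [← h3.lintegral_comp_emb (Homeomorph.measurableEmbedding _)
      (fun x : (sphere (0:ℂ) 1 × Set.Ioi (0:ℝ)) => G x.2.1)]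
    simp only [homeomorphUnitSphereProd_apply_snd_coe]
  have h5 : ∫⁻ x : (sphere (0:ℂ) 1 × Set.Ioi (0:ℝ)), G x.2.1
          ∂((volume : Measure ℂ).toSphere.prod
            (Measure.volumeIoiPow (Module.finrank ℝ ℂ - 1)))
      = (volume : Measure ℂ).toSphere Set.univ
          * ∫⁻ r : Set.Ioi (0:ℝ), G r.1 ∂(Measure.volumeIoiPow (Module.finrank ℝ ℂ - 1)) := by
    rw [lintegral_prod (f := fun x : (sphere (0:ℂ) 1 × Set.Ioi (0:ℝ)) => G x.2.1)
      ((hGm.comp (measurable_subtype_coe.comp measurable_snd)).aemeasurable)]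
    dsimp only
    rw [lintegral_const, mul_comm]
  have h6 : ∫⁻ r : Set.Ioi (0:ℝ), G r.1 ∂(Measure.volumeIoiPow (Module.finrank ℝ ℂ - 1))
      = ∫⁻ s in Set.Ioi (0:ℝ), ENNReal.ofReal s * G s := by
    rw [hdim]
    have e1 : (∫⁻ (r : Set.Ioi (0:ℝ)), G r.1 ∂(Measure.volumeIoiPow 1))
        = ∫⁻ (r : Set.Ioi (0:ℝ)), ENNReal.ofReal (r.1 ^ (1:ℕ)) * G r.1
            ∂((volume : Measure ℝ).comap Subtype.val) :=
      lintegral_withDensity_eq_lintegral_mul _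
        (by fun_prop) (hGm.comp measurable_subtype_coe)
    have e2 : (∫⁻ (r : Set.Ioi (0:ℝ)), ENNReal.ofReal r.1 * G r.1
            ∂((volume : Measure ℝ).comap Subtype.val))
        = ∫⁻ s in Set.Ioi (0:ℝ), ENNReal.ofReal s * G s :=
      lintegral_subtype_comap measurableSet_Ioi (fun s : ℝ => ENNReal.ofReal s * G s)
    rw [show ((2:ℕ) - 1) = 1 from rfl]
    rw [e1]
    simp only [pow_one]
    exact e2
  have h7 : (volume : Measure ℂ).toSphere Set.univ = 2 * ENNReal.ofReal Real.pi := by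
    rw [Measure.toSphere_apply_univ, hdim, Complex.volume_ball]
    rw [← NNReal.coe_real_pi, ENNReal.ofReal_coe_nnreal]
    simp
  have h8 : ∫⁻ s in Set.Ioi (0:ℝ), ENNReal.ofReal s * G s
      = ∫⁻ s in Set.Ioo (0:ℝ) 1, ENNReal.ofReal s * g s := by
    rw [← lintegral_indicator measurableSet_Ioi, ← lintegral_indicator measurableSet_Ioo]
    refine lintegral_congr fun s => ?_
    by_cases h0 : 0 < s
    · by_cases hs1 : s < 1
      · simp [Set.indicator_apply, h0, hs1, hG, Set.mem_Ioo, Set.mem_Ioi]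
      · simp [Set.indicator_apply, h0, hs1, hG, Set.mem_Ioo, Set.mem_Ioi]
    · simp [Set.indicator_apply, h0, hG, Set.mem_Ioo, Set.mem_Ioi]
  rw [h1, h2, h4, h5, h6, h7, h8]

lemma lintegral_ball_congr_radial {g₁ g₂ : ℝ → ℝ≥0∞}
    (h : g₁ =ᵐ[volume.restrict (Set.Ioo (0:ℝ) 1)] g₂) :
    ∫⁻ z in Metric.ball (0:ℂ) 1, g₁ ‖z‖ = ∫⁻ z in Metric.ball (0:ℂ) 1, g₂ ‖z‖ := by
  have hS : (volume.restrict (Set.Ioo (0:ℝ) 1)) {s | ¬ g₁ s = g₂ s} = 0 := ae_iff.mp h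
  obtain ⟨T, hST, hTm, hT0⟩ := exists_measurable_superset_of_null hS
  have hT0' : volume (T ∩ Set.Ioo (0:ℝ) 1) = 0 := by
    rwa [Measure.restrict_apply hTm] at hT0
  refine lintegral_congr_ae ((ae_restrict_iff' measurableSet_ball).2 ?_)
  rw [ae_iff]
  refine measure_mono_null (show _ ⊆ {(0:ℂ)} ∪
    ((fun z : ℂ => ‖z‖) ⁻¹' (T ∩ Set.Ioo (0:ℝ) 1) ∩ Metric.ball (0:ℂ) 1) from ?_) ?_
  · intro z hz
    simp only [Set.mem_setOf_eq, _root_.not_imp] at hz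
    obtain ⟨hzb, hzne⟩ := hz
    by_cases hz0 : z = 0
    · exact Or.inl (by simp [hz0])
    · refine Or.inr ⟨⟨hST hzne, ?_, ?_⟩, hzb⟩
      · exact norm_pos_iff.2 hz0
      · simpa [mem_ball_zero_iff] using hzb
  · refine measure_union_null (measure_singleton _) ?_
    have key : volume ((fun z : ℂ => ‖z‖) ⁻¹' (T ∩ Set.Ioo (0:ℝ) 1) ∩ Metric.ball (0:ℂ) 1)
        = ∫⁻ z in Metric.ball (0:ℂ) 1,
            (T ∩ Set.Ioo (0:ℝ) 1).indicator (fun _ => (1:ℝ≥0∞)) ‖z‖ := by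
      rw [lintegral_indicator_const_comp measurable_norm (hTm.inter measurableSet_Ioo), one_mul,
        Measure.restrict_apply (measurable_norm (hTm.inter measurableSet_Ioo))]
    rw [key, lintegral_ball_radial _ (measurable_const.indicator (hTm.inter measurableSet_Ioo))]
    have : ∫⁻ s in Set.Ioo (0:ℝ) 1, ENNReal.ofReal s *
        (T ∩ Set.Ioo (0:ℝ) 1).indicator (fun _ => (1:ℝ≥0∞)) s = 0 := by
      have hle : ∀ s : ℝ, ENNReal.ofReal s *
          (T ∩ Set.Ioo (0:ℝ) 1).indicator (fun _ => (1:ℝ≥0∞)) s ≤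
          (T ∩ Set.Ioo (0:ℝ) 1).indicator (fun _ => (⊤:ℝ≥0∞)) s := by
        intro s
        by_cases hs : s ∈ T ∩ Set.Ioo (0:ℝ) 1
        · simp [Set.indicator_of_mem hs]
        · simp [Set.indicator_of_notMem hs]
      refine le_antisymm ?_ zero_le
      calc ∫⁻ s in Set.Ioo (0:ℝ) 1, ENNReal.ofReal s *
            (T ∩ Set.Ioo (0:ℝ) 1).indicator (fun _ => (1:ℝ≥0∞)) s
          ≤ ∫⁻ s in Set.Ioo (0:ℝ) 1,
            (T ∩ Set.Ioo (0:ℝ) 1).indicator (fun _ => (⊤:ℝ≥0∞)) s :=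
            lintegral_mono hle
        _ = ⊤ * volume (T ∩ Set.Ioo (0:ℝ) 1 ∩ Set.Ioo (0:ℝ) 1) := by
            rw [lintegral_indicator (hTm.inter measurableSet_Ioo), setLIntegral_const,
              Measure.restrict_apply (hTm.inter measurableSet_Ioo)]
        _ = 0 := by
            rw [Set.inter_assoc, Set.inter_self, hT0', mul_zero]
    rw [this, mul_zero]

lemma setLIntegral_shrink {h : ℝ → ℝ≥0∞} {S T : Set ℝ} (hS : MeasurableSet S)
    (hT : MeasurableSet T) (hsub : T ⊆ S) (hzero : ∀ s ∈ S \ T, h s = 0) :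
    ∫⁻ s in S, h s = ∫⁻ s in T, h s := by
  rw [← lintegral_indicator hS, ← lintegral_indicator hT]
  refine lintegral_congr fun s => ?_
  by_cases hsT : s ∈ T
  · rw [Set.indicator_of_mem hsT, Set.indicator_of_mem (hsub hsT)]
  · rw [Set.indicator_of_notMem hsT]
    by_cases hsS : s ∈ S
    · rw [Set.indicator_of_mem hsS, hzero s ⟨hsS, hsT⟩]
    · rw [Set.indicator_of_notMem hsS]
lemma sw_integrableOn {w : ℝ → ℝ} (hint : MeasureTheory.IntegrableOn w (Set.Ico (0:ℝ) 1))
    {r : ℝ} (hr0 : 0 ≤ r) :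
    MeasureTheory.IntegrableOn (fun s => s * w s) (Set.Ioo r 1) := by
  have hsub : Set.Ioo r 1 ⊆ Set.Ico (0:ℝ) 1 := fun s hs => ⟨le_trans hr0 hs.1.le, hs.2⟩
  have hw' : MeasureTheory.IntegrableOn w (Set.Ioo r 1) := hint.mono_set hsub
  refine MeasureTheory.Integrable.mono hw' (aestronglyMeasurable_id.mul hw'.1) ?_
  filter_upwards [ae_restrict_mem measurableSet_Ioo] with s hs
  have h1 : |s| ≤ 1 := by
    rw [abs_of_nonneg (le_trans hr0 hs.1.le)]; exact hs.2.le
  calc ‖s * w s‖ = |s| * ‖w s‖ := by rw [norm_mul]; rfl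
    _ ≤ 1 * ‖w s‖ := by gcongr
    _ = ‖w s‖ := one_mul _

lemma hat1_pos {w : ℝ → ℝ} (hw : IsRadialWeight w) {r : ℝ} (hr : r ∈ Set.Ico (0:ℝ) 1) :
    0 < hat1 w r := by
  obtain ⟨hpos, hint, hhat⟩ := hw
  set r' := (r + 1) / 2 with hr'def
  have hrr' : r < r' := by simp only [hr'def]; linarith [hr.2]
  have hr'1 : r' < 1 := by simp only [hr'def]; linarith [hr.2]
  have hr'0 : 0 < r' := by simp only [hr'def]; linarith [hr.1]
  have h1 : 0 < hatw w r' := hhat r' ⟨hr'0.le, hr'1⟩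
  have hIw' : MeasureTheory.IntegrableOn w (Set.Ioo r' 1) :=
    hint.mono_set (fun s hs => ⟨le_trans hr'0.le hs.1.le, hs.2⟩)
  have hIsw : MeasureTheory.IntegrableOn (fun s => s * w s) (Set.Ioo r 1) :=
    sw_integrableOn hint hr.1
  have hIsw' : MeasureTheory.IntegrableOn (fun s => s * w s) (Set.Ioo r' 1) :=
    hIsw.mono_set (Set.Ioo_subset_Ioo hrr'.le le_rfl)
  have hIcw' : MeasureTheory.IntegrableOn (fun s => r' * w s) (Set.Ioo r' 1) :=
    hIw'.const_mul r'
  have step1 : r' * hatw w r' ≤ hat1 w r' := by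
    rw [hatw, ← MeasureTheory.integral_const_mul]
    exact MeasureTheory.setIntegral_mono_on hIcw' hIsw' measurableSet_Ioo
      (fun s hs => mul_le_mul_of_nonneg_right hs.1.le
        (hpos s ⟨le_trans hr'0.le hs.1.le, hs.2⟩))
  have step2 : hat1 w r' ≤ hat1 w r := by
    refine MeasureTheory.setIntegral_mono_set hIsw ?_ ?_
    · filter_upwards [ae_restrict_mem measurableSet_Ioo] with s hs
      exact mul_nonneg (le_trans hr.1 hs.1.le) (hpos s ⟨le_trans hr.1 hs.1.le, hs.2⟩)
    · exact Filter.Eventually.of_forall (Set.Ioo_subset_Ioo hrr'.le le_rfl)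
  calc (0:ℝ) < r' * hatw w r' := mul_pos hr'0 h1
    _ ≤ hat1 w r' := step1
    _ ≤ hat1 w r := step2
/-- Let `1 < p < ∞`, `ω` a radial weight and `ν : [0,1) → (0,∞)` measurable
with `ν ∈ L¹_ω([0,1))`. If `‖M_{ω₁,rad}(f)‖_{L^p_{ων}} ≤ C ‖f‖_{L^p_{ων}}` for every
`f ∈ L^p_{ων}`, then `A_p(ω,ων) ≤ C`. -/
theorem Ap_le_of_maximal_bounded (p : ℝ) (hp : 1 < p) (w v : ℝ → ℝ)
    (hw : IsRadialWeight w) (hvm : Measurable v) (hvpos : ∀ s ∈ Set.Ico (0:ℝ) 1, 0 < v s)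
    (hvL1 : MeasureTheory.IntegrableOn (fun s => v s * w s) (Set.Ico (0:ℝ) 1))
    (C : ℝ) (hC : 0 < C)
    (hbdd : ∀ f : ℂ → ℝ, Measurable f → LpR p (fun s => w s * v s) f < ⊤ →
      LpE p (fun s => w s * v s) (MradE w f) ≤
        ENNReal.ofReal C * LpR p (fun s => w s * v s) f) :
    Ap2 p w v ≤ ENNReal.ofReal C := by
  obtain ⟨hwpos, hwint, hwhat⟩ := hw
  have hp0 : (0:ℝ) < p := lt_trans one_pos hp
  have hp1 : (0:ℝ) < p - 1 := by linarith
  have hq : (0:ℝ) < 1 - 1 / p := by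
    have h1 : 1 / p < 1 := by rw [div_lt_one hp0]; linarith
    linarith
  -- measurable nonnegative version of w
  have hwsm := hwint.1
  set W0 : ℝ → ℝ := hwsm.mk w with hW0_def
  have hW0m : StronglyMeasurable W0 := hwsm.stronglyMeasurable_mk
  have hwW0 : w =ᵐ[volume.restrict (Set.Ico (0:ℝ) 1)] W0 := hwsm.ae_eq_mk
  set W : ℝ → ℝ := fun s => if 0 ≤ s ∧ s < 1 then max (W0 s) 0 else 0 with hW_def
  have hWm : Measurable W := by
    refine Measurable.ite ?_ (hW0m.measurable.max measurable_const) measurable_const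
    exact (measurableSet_Ico : MeasurableSet (Set.Ico (0:ℝ) 1))
  have hWnn : ∀ s, 0 ≤ W s := by
    intro s
    by_cases h : 0 ≤ s ∧ s < 1 <;> simp [hW_def, h, le_max_right]
  have hWw : W =ᵐ[volume.restrict (Set.Ico (0:ℝ) 1)] w := by
    filter_upwards [hwW0, ae_restrict_mem measurableSet_Ico] with s h1 h2
    simp only [hW_def]
    rw [if_pos ⟨h2.1, h2.2⟩, ← h1]
    exact max_eq_left (hwpos s h2)
  have hWint : MeasureTheory.IntegrableOn W (Set.Ico (0:ℝ) 1) := hwint.congr hWw.symm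
  -- main supremum bound
  rw [Ap2]
  refine iSup₂_le fun r hr => ?_
  have hr0 : (0:ℝ) ≤ r := hr.1
  have hr1 : r < 1 := hr.2
  set e : ℝ := -(p / (p - 1)) / p with he_def
  have he1 : e * (p - 1) = -1 := by
    rw [he_def]; field_simp
  have hIoosub : Set.Ioo r 1 ⊆ Set.Ico (0:ℝ) 1 := fun s hs => ⟨le_trans hr0 hs.1.le, hs.2⟩
  have hWwIoo : W =ᵐ[volume.restrict (Set.Ioo r 1)] w :=
    ae_restrict_of_ae_restrict_of_subset hIoosub hWw
  have hWw01 : W =ᵐ[volume.restrict (Set.Ioo (0:ℝ) 1)] w :=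
    ae_restrict_of_ae_restrict_of_subset Set.Ioo_subset_Ico_self hWw
  set D : ℝ≥0∞ := ENNReal.ofReal (hat1 w r) with hD_def
  have hDpos : 0 < hat1 w r := hat1_pos ⟨hwpos, hwint, hwhat⟩ hr
  have hD0 : D ≠ 0 := by
    rw [hD_def]; exact (ENNReal.ofReal_pos.2 hDpos).ne'
  have hDtop : D ≠ ⊤ := ENNReal.ofReal_ne_top
  set A : ℝ≥0∞ := ∫⁻ s in Set.Ioo r 1, ENNReal.ofReal (s * w s * v s) with hA_def
  set B : ℝ≥0∞ := ∫⁻ s in Set.Ioo r 1, ENNReal.ofReal (s * w s * v s ^ e) with hB_def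
  set A' : ℝ≥0∞ := ∫⁻ s in Set.Ioo r 1, ENNReal.ofReal s * ENNReal.ofReal (W s * v s)
    with hA'_def
  have hvIoo : ∀ s ∈ Set.Ioo r 1, 0 < v s := fun s hs => hvpos s (hIoosub hs)
  have hAA' : A = A' := by
    rw [hA_def, hA'_def]
    refine lintegral_congr_ae ?_
    filter_upwards [hWwIoo, ae_restrict_mem measurableSet_Ioo] with s hsW hs
    rw [← ENNReal.ofReal_mul (le_trans hr0 hs.1.le)]
    congr 1
    rw [hsW]; ring
  set Bn : ℕ → ℝ≥0∞ := fun n =>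
    ∫⁻ s in Set.Ioo r 1, ENNReal.ofReal (min (v s ^ e) (n:ℝ) * (s * W s)) with hBn_def
  have hBnfin : ∀ n : ℕ, Bn n < ⊤ := by
    intro n
    have hle : Bn n ≤ ∫⁻ s in Set.Ioo r 1, ENNReal.ofReal ((n:ℝ) * (s * W s)) := by
      rw [hBn_def]
      refine lintegral_mono_ae ?_
      filter_upwards [ae_restrict_mem measurableSet_Ioo] with s hs
      refine ENNReal.ofReal_le_ofReal (mul_le_mul_of_nonneg_right (min_le_right _ _) ?_)
      exact mul_nonneg (le_trans hr0 hs.1.le) (hWnn s)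
    refine lt_of_le_of_lt hle ?_
    exact ((sw_integrableOn hWint hr0).const_mul (n:ℝ)).lintegral_lt_top
  -- the key inequality
  have key : ∀ n : ℕ, Bn n * A ^ (1/p) ≤ ENNReal.ofReal C * (Bn n) ^ (1/p) * D := by
    intro n
    set f : ℂ → ℝ := fun z =>
      if r < ‖z‖ ∧ ‖z‖ < 1 then min (v ‖z‖ ^ e) (n:ℝ) else 0 with hf_def
    have hcondm : MeasurableSet {z : ℂ | r < ‖z‖ ∧ ‖z‖ < 1} :=
      measurable_norm (measurableSet_Ioo : MeasurableSet (Set.Ioo r 1))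
    have hfm : Measurable f :=
      Measurable.ite hcondm
        (((hvm.pow_const e).min measurable_const).comp measurable_norm) measurable_const
    have hupos : ∀ s, r < s → s < 1 → 0 < v s := fun s h1 h2 => hvpos s ⟨le_trans hr0 h1.le, h2⟩
    have hunn : ∀ s, r < s → s < 1 → 0 ≤ min (v s ^ e) (n:ℝ) := fun s h1 h2 =>
      le_min (Real.rpow_pos_of_pos (hupos s h1 h2) e).le (Nat.cast_nonneg n)
    have hclaim : ∀ s, r < s → s < 1 → min (v s ^ e) (n:ℝ) ^ p * v s ≤ min (v s ^ e) (n:ℝ) := by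
      intro s h1 h2
      rcases eq_or_lt_of_le (hunn s h1 h2) with h0 | h0
      · rw [← h0, Real.zero_rpow hp0.ne', zero_mul]
      · have hv := hupos s h1 h2
        have hle1 : min (v s ^ e) (n:ℝ) ^ (p - 1) ≤ (v s ^ e) ^ (p - 1) :=
          Real.rpow_le_rpow h0.le (min_le_left _ _) (by linarith)
        have hle2 : (v s ^ e) ^ (p - 1) = (v s)⁻¹ := by
          rw [← Real.rpow_mul hv.le, he1, Real.rpow_neg_one]
        have h3 : min (v s ^ e) (n:ℝ) ^ p
            = min (v s ^ e) (n:ℝ) ^ (p - 1) * min (v s ^ e) (n:ℝ) := by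
          nth_rewrite 1 [show p = (p - 1) + 1 by ring]
          rw [Real.rpow_add h0, Real.rpow_one]
        calc min (v s ^ e) (n:ℝ) ^ p * v s
            = min (v s ^ e) (n:ℝ) ^ (p - 1) * min (v s ^ e) (n:ℝ) * v s := by rw [h3]
          _ ≤ (v s)⁻¹ * min (v s ^ e) (n:ℝ) * v s := by
              rw [← hle2]
              exact mul_le_mul_of_nonneg_right
                (mul_le_mul_of_nonneg_right hle1 h0.le) hv.le
          _ = min (v s ^ e) (n:ℝ) := by field_simp
    -- Vn and the LpR computation
    set Vn : ℝ≥0∞ := ∫⁻ s in Set.Ioo r 1,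
      ENNReal.ofReal s * ENNReal.ofReal (min (v s ^ e) (n:ℝ) ^ p * (W s * v s)) with hVn_def
    set gW : ℝ → ℝ≥0∞ := fun s =>
      ENNReal.ofReal ((if r < s ∧ s < 1 then min (v s ^ e) (n:ℝ) ^ p else 0) * (W s * v s))
      with hgW_def
    have hgWm : Measurable gW := by
      refine Measurable.ennreal_ofReal (Measurable.mul ?_ (hWm.mul hvm))
      exact Measurable.ite (measurableSet_Ioo : MeasurableSet (Set.Ioo r 1))
        (((hvm.pow_const e).min measurable_const).pow_const p) measurable_const
    have hpi0 : ENNReal.ofReal Real.pi ≠ 0 := (ENNReal.ofReal_pos.2 Real.pi_pos).ne'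
    have hLpR : LpR p (fun s => w s * v s) f = (2 * Vn) ^ (1/p) := by
      rw [LpR]
      have e_int : (∫⁻ z in Metric.ball (0:ℂ) 1,
          ENNReal.ofReal (|f z| ^ p * (w ‖z‖ * v ‖z‖)))
          = ∫⁻ z in Metric.ball (0:ℂ) 1,
            ENNReal.ofReal ((if r < ‖z‖ ∧ ‖z‖ < 1 then min (v ‖z‖ ^ e) (n:ℝ) ^ p else 0)
              * (w ‖z‖ * v ‖z‖)) := by
        refine lintegral_congr fun z => ?_
        by_cases hz : r < ‖z‖ ∧ ‖z‖ < 1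
        · rw [hf_def]; simp only [if_pos hz]
          rw [abs_of_nonneg (hunn _ hz.1 hz.2)]
        · rw [hf_def]; simp only [if_neg hz]
          simp [Real.zero_rpow hp0.ne']
      have e_congr : (∫⁻ z in Metric.ball (0:ℂ) 1,
            ENNReal.ofReal ((if r < ‖z‖ ∧ ‖z‖ < 1 then min (v ‖z‖ ^ e) (n:ℝ) ^ p else 0)
              * (w ‖z‖ * v ‖z‖)))
          = ∫⁻ z in Metric.ball (0:ℂ) 1, gW ‖z‖ := by
        refine lintegral_ball_congr_radial
          (g₁ := fun s => ENNReal.ofReal ((if r < s ∧ s < 1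
            then min (v s ^ e) (n:ℝ) ^ p else 0) * (w s * v s)))
          (g₂ := gW) ?_
        filter_upwards [hWw01] with s hsW
        rw [hgW_def]; simp only []
        rw [hsW]
      have e_polar := lintegral_ball_radial gW hgWm
      have e_shrink : (∫⁻ s in Set.Ioo (0:ℝ) 1, ENNReal.ofReal s * gW s) = Vn := by
        rw [setLIntegral_shrink measurableSet_Ioo measurableSet_Ioo
          (Set.Ioo_subset_Ioo hr0 le_rfl) ?_]
        · rw [hVn_def]
          refine setLIntegral_congr_fun measurableSet_Ioo
            (fun s hs => ?_)
          rw [hgW_def]; simp only []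
          rw [if_pos (⟨hs.1, hs.2⟩ : r < s ∧ s < 1)]
        · intro s hs
          rw [hgW_def]; simp only []
          rw [if_neg, zero_mul, ENNReal.ofReal_zero, mul_zero]
          exact fun hc => hs.2 ⟨hc.1, hc.2⟩
      rw [e_int, e_congr, e_polar, e_shrink]
      congr 1
      rw [show 2 * ENNReal.ofReal Real.pi * Vn = 2 * Vn * ENNReal.ofReal Real.pi by ring,
        mul_div_assoc, ENNReal.div_self hpi0 ENNReal.ofReal_ne_top, mul_one]
    have hVnBn : Vn ≤ Bn n := by
      rw [hVn_def, hBn_def]; simp only []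
      refine lintegral_mono_ae ?_
      filter_upwards [ae_restrict_mem measurableSet_Ioo] with s hs
      have hsnn : (0:ℝ) ≤ s := le_trans hr0 hs.1.le
      rw [← ENNReal.ofReal_mul hsnn]
      refine ENNReal.ofReal_le_ofReal ?_
      have h := mul_le_mul_of_nonneg_right (hclaim s hs.1 hs.2)
        (mul_nonneg hsnn (hWnn s))
      calc s * (min (v s ^ e) (n:ℝ) ^ p * (W s * v s))
          = min (v s ^ e) (n:ℝ) ^ p * v s * (s * W s) := by ring
        _ ≤ min (v s ^ e) (n:ℝ) * (s * W s) := h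
    -- lower bound for the maximal function on the annulus
    have hMrad : ∀ z : ℂ, r < ‖z‖ → ‖z‖ < 1 → Bn n / D ≤ MradE w f z := by
      intro z h1 h2
      have hz0 : (0:ℝ) < ‖z‖ := lt_of_le_of_lt hr0 h1
      have heqnum : (∫⁻ s in Set.Ioo r 1,
          ENNReal.ofReal (|f ((s / ‖z‖) • z)| * (s * w s))) = Bn n := by
        rw [hBn_def]; simp only []
        refine lintegral_congr_ae ?_
        filter_upwards [hWwIoo, ae_restrict_mem measurableSet_Ioo] with s hsW hs
        have hnorm : ‖(s / ‖z‖) • z‖ = s := by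
          rw [norm_smul, Real.norm_eq_abs,
            abs_of_nonneg (div_nonneg (le_trans hr0 hs.1.le) hz0.le),
            div_mul_cancel₀ _ hz0.ne']
        rw [hf_def]; simp only []
        rw [hnorm, if_pos (⟨hs.1, hs.2⟩ : r < s ∧ s < 1),
          abs_of_nonneg (hunn s hs.1 hs.2), hsW]
      rw [MradE]
      refine le_iSup₂_of_le r ⟨hr0, h1⟩ ?_
      rw [heqnum, hD_def]
    -- lower bound for the LpE norm
    have hKfin : Bn n / D ≠ ⊤ := (ENNReal.div_lt_top (hBnfin n).ne hD0).ne
    have hKpfin : (Bn n / D) ^ p ≠ ⊤ := ENNReal.rpow_ne_top_of_nonneg hp0.le hKfin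
    set qW : ℝ → ℝ≥0∞ := fun s =>
      (if r < s ∧ s < 1 then (Bn n / D) ^ p else 0) * ENNReal.ofReal (W s * v s) with hqW_def
    have hqWm : Measurable qW :=
      (Measurable.ite (measurableSet_Ioo : MeasurableSet (Set.Ioo r 1)) measurable_const
        measurable_const).mul ((hWm.mul hvm).ennreal_ofReal)
    have hq_shrink : (∫⁻ s in Set.Ioo (0:ℝ) 1, ENNReal.ofReal s * qW s)
        = (Bn n / D) ^ p * A' := by
      rw [setLIntegral_shrink measurableSet_Ioo measurableSet_Ioo
        (Set.Ioo_subset_Ioo hr0 le_rfl) ?_]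
      · rw [hA'_def, ← lintegral_const_mul' ((Bn n / D) ^ p) _ hKpfin]
        refine setLIntegral_congr_fun measurableSet_Ioo
          (fun s hs => ?_)
        rw [hqW_def]; simp only []
        rw [if_pos (⟨hs.1, hs.2⟩ : r < s ∧ s < 1)]
        ring
      · intro s hs
        rw [hqW_def]; simp only []
        rw [if_neg, zero_mul, mul_zero]
        exact fun hc => hs.2 ⟨hc.1, hc.2⟩
    have hLpE : (2 * ((Bn n / D) ^ p * A')) ^ (1/p)
        ≤ LpE p (fun s => w s * v s) (MradE w f) := by
      rw [LpE]
      refine ENNReal.rpow_le_rpow ?_ (by positivity)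
      have hnum : 2 * ENNReal.ofReal Real.pi * ((Bn n / D) ^ p * A')
          ≤ ∫⁻ z in Metric.ball (0:ℂ) 1,
              MradE w f z ^ p * ENNReal.ofReal (w ‖z‖ * v ‖z‖) := by
        rw [← hq_shrink, ← lintegral_ball_radial qW hqWm]
        have e_congr : (∫⁻ z in Metric.ball (0:ℂ) 1, qW ‖z‖)
            = ∫⁻ z in Metric.ball (0:ℂ) 1,
              (if r < ‖z‖ ∧ ‖z‖ < 1 then (Bn n / D) ^ p else 0)
                * ENNReal.ofReal (w ‖z‖ * v ‖z‖) := by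
          refine lintegral_ball_congr_radial
            (g₁ := qW)
            (g₂ := fun s => (if r < s ∧ s < 1 then (Bn n / D) ^ p else 0)
              * ENNReal.ofReal (w s * v s)) ?_
          filter_upwards [hWw01] with s hsW
          rw [hqW_def]; simp only []
          rw [hsW]
        rw [e_congr]
        refine lintegral_mono fun z => ?_
        by_cases hz : r < ‖z‖ ∧ ‖z‖ < 1
        · rw [if_pos hz]
          exact mul_le_mul_left (ENNReal.rpow_le_rpow (hMrad z hz.1 hz.2) hp0.le) _
        · rw [if_neg hz, zero_mul]
          exact zero_le
      calc 2 * ((Bn n / D) ^ p * A')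
          = 2 * ENNReal.ofReal Real.pi * ((Bn n / D) ^ p * A') / ENNReal.ofReal Real.pi := by
            rw [show 2 * ENNReal.ofReal Real.pi * ((Bn n / D) ^ p * A')
              = 2 * ((Bn n / D) ^ p * A') * ENNReal.ofReal Real.pi by ring,
              mul_div_assoc, ENNReal.div_self hpi0 ENNReal.ofReal_ne_top, mul_one]
        _ ≤ _ := ENNReal.div_le_div_right hnum _
    -- apply the hypothesis
    have hLpRfin : LpR p (fun s => w s * v s) f < ⊤ := by
      rw [hLpR]
      refine ENNReal.rpow_lt_top_of_nonneg (by positivity) ?_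
      exact (ENNReal.mul_lt_top (lt_top_iff_ne_top.2 ENNReal.ofNat_ne_top)
        (lt_of_le_of_lt hVnBn (hBnfin n))).ne
    have hchain : (2 * ((Bn n / D) ^ p * A')) ^ (1/p)
        ≤ ENNReal.ofReal C * (2 * Bn n) ^ (1/p) := by
      calc (2 * ((Bn n / D) ^ p * A')) ^ (1/p)
          ≤ LpE p (fun s => w s * v s) (MradE w f) := hLpE
        _ ≤ ENNReal.ofReal C * LpR p (fun s => w s * v s) f := hbdd f hfm hLpRfin
        _ = ENNReal.ofReal C * (2 * Vn) ^ (1/p) := by rw [hLpR]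
        _ ≤ ENNReal.ofReal C * (2 * Bn n) ^ (1/p) :=
            mul_le_mul_right (ENNReal.rpow_le_rpow (mul_le_mul_right hVnBn 2)
              (by positivity)) _
    have h2ne : ((2:ℝ≥0∞)) ^ (1/p) ≠ 0 :=
      (ENNReal.rpow_pos (by norm_num) ENNReal.ofNat_ne_top).ne'
    have h2t : ((2:ℝ≥0∞)) ^ (1/p) ≠ ⊤ :=
      ENNReal.rpow_ne_top_of_nonneg (by positivity) ENNReal.ofNat_ne_top
    have hlhs : (2 * ((Bn n / D) ^ p * A')) ^ (1/p)
        = (2:ℝ≥0∞) ^ (1/p) * ((Bn n / D) * A' ^ (1/p)) := by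
      rw [ENNReal.mul_rpow_of_nonneg _ _ (by positivity),
        ENNReal.mul_rpow_of_nonneg _ _ (by positivity),
        ← ENNReal.rpow_mul, mul_one_div_cancel hp0.ne', ENNReal.rpow_one]
    have hrhs : ENNReal.ofReal C * (2 * Bn n) ^ (1/p)
        = (2:ℝ≥0∞) ^ (1/p) * (ENNReal.ofReal C * (Bn n) ^ (1/p)) := by
      rw [ENNReal.mul_rpow_of_nonneg _ _ (by positivity)]; ring
    rw [hlhs, hrhs] at hchain
    have hmain2 : (Bn n / D) * A' ^ (1/p) ≤ ENNReal.ofReal C * (Bn n) ^ (1/p) :=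
      (ENNReal.mul_le_mul_iff_right h2ne h2t).mp hchain
    have hmul := mul_le_mul_left hmain2 D
    calc Bn n * A ^ (1/p) = (Bn n / D) * A' ^ (1/p) * D := by
          rw [hAA', mul_right_comm, ENNReal.div_mul_cancel hD0 hDtop]
      _ ≤ (ENNReal.ofReal C * (Bn n) ^ (1/p)) * D := hmul
      _ = ENNReal.ofReal C * (Bn n) ^ (1/p) * D := by ring
  -- from key to per-n bound
  have step2 : ∀ n : ℕ, (Bn n) ^ (1 - 1/p) * A ^ (1/p) ≤ ENNReal.ofReal C * D := by
    intro n
    by_cases h0 : Bn n = 0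
    · rw [h0, ENNReal.zero_rpow_of_pos hq, zero_mul]
      exact zero_le
    · have hfin := (hBnfin n).ne
      have hsplit : Bn n = (Bn n) ^ (1/p) * (Bn n) ^ (1 - 1/p) := by
        rw [← ENNReal.rpow_add _ _ h0 hfin, show 1/p + (1 - 1/p) = 1 by ring,
          ENNReal.rpow_one]
      have hkey := key n
      rw [hsplit, mul_assoc] at hkey
      have hrhs : ENNReal.ofReal C * ((Bn n) ^ (1/p) * (Bn n) ^ (1 - 1/p)) ^ (1/p) * D
          = (Bn n) ^ (1/p) * (ENNReal.ofReal C * D) := by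
        rw [← hsplit]; ring
      rw [hrhs] at hkey
      have hpow0 : (Bn n) ^ (1/p) ≠ 0 := by
        refine (ENNReal.rpow_pos (pos_iff_ne_zero.2 h0) hfin).ne'
      have hpowtop : (Bn n) ^ (1/p) ≠ ⊤ := ENNReal.rpow_ne_top_of_nonneg (by positivity) hfin
      exact (ENNReal.mul_le_mul_iff_right hpow0 hpowtop).mp hkey
  -- supremum of the truncations
  have hBsup : (⨆ n : ℕ, Bn n) = B := by
    have hMC := lintegral_iSup' (μ := volume.restrict (Set.Ioo r 1))
      (f := fun (n : ℕ) (s : ℝ) => ENNReal.ofReal (min (v s ^ e) (n:ℝ) * (s * W s)))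
      (fun n => ((((hvm.pow_const e).min measurable_const).mul
        ((measurable_id.mul hWm))).ennreal_ofReal).aemeasurable) ?_
    · rw [hBn_def]
      simp only []
      rw [← hMC, hB_def]
      refine lintegral_congr_ae ?_
      filter_upwards [hWwIoo, ae_restrict_mem measurableSet_Ioo] with s hsW hs
      have hsnn : (0:ℝ) ≤ s := le_trans hr0 hs.1.le
      have hswnn : (0:ℝ) ≤ s * W s := mul_nonneg hsnn (hWnn s)
      refine le_antisymm (iSup_le fun m => ?_) ?_
      · refine ENNReal.ofReal_le_ofReal ?_
        calc min (v s ^ e) (m:ℝ) * (s * W s) ≤ v s ^ e * (s * W s) :=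
              mul_le_mul_of_nonneg_right (min_le_left _ _) hswnn
          _ = s * w s * v s ^ e := by rw [hsW]; ring
      · refine le_iSup_of_le ⌈v s ^ e⌉₊ ?_
        refine le_of_eq ?_
        rw [min_eq_left (Nat.le_ceil _)]
        congr 1
        rw [hsW]; ring
    · filter_upwards [ae_restrict_mem measurableSet_Ioo] with s hs
      intro m k hmk
      refine ENNReal.ofReal_le_ofReal (mul_le_mul_of_nonneg_right
        (min_le_min le_rfl (Nat.cast_le.2 hmk))
        (mul_nonneg (le_trans hr0 hs.1.le) (hWnn s)))
  -- pass to the limit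
  have step3 : B ^ (1 - 1/p) * A ^ (1/p) ≤ ENNReal.ofReal C * D := by
    rw [← hBsup]
    have hiso : (⨆ n : ℕ, Bn n) ^ (1 - 1/p) = ⨆ n : ℕ, (Bn n) ^ (1 - 1/p) := by
      have h := (ENNReal.orderIsoRpow (1 - 1/p) hq).map_iSup Bn
      simp only [ENNReal.orderIsoRpow_apply] at h
      exact h
    rw [hiso, ENNReal.iSup_mul]
    exact iSup_le step2
  rw [ENNReal.div_le_iff hD0 hDtop, mul_comm (A ^ (1/p))]
  exact step3

end
end

section
/- Let ω be a radial weight and let f be a nonnegative measurable function on 𝔻. Then M_{ω₁,rad}(f)(z) ≤ 2 S_{ω₁,rad}(f)(z) for every z ∈ 𝔻∖{0}. -/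
open MeasureTheory Set Metric
open scoped ENNReal NNReal

noncomputable section

lemma intw {w : ℝ → ℝ} (hw : IsRadialWeight w) {a : ℝ} (ha : 0 ≤ a) :
    IntegrableOn w (Set.Ioo a 1) :=
  hw.2.1.mono_set (fun x hx => ⟨le_trans ha hx.1.le, hx.2⟩)

lemma int1 {w : ℝ → ℝ} (hw : IsRadialWeight w) {a : ℝ} (ha : 0 ≤ a) :
    IntegrableOn (fun s => s * w s) (Set.Ioo a 1) := by
  refine (intw hw ha).mono' (aestronglyMeasurable_id.mul (intw hw ha).aestronglyMeasurable) ?_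
  rw [ae_restrict_iff' measurableSet_Ioo]
  refine ae_of_all _ fun s hs => ?_
  have h0 : (0:ℝ) ≤ s := le_trans ha hs.1.le
  have hwpos : 0 ≤ w s := hw.1 s ⟨h0, hs.2⟩
  simp only [norm_mul, Real.norm_eq_abs, abs_of_nonneg h0, abs_of_nonneg hwpos]
  exact mul_le_of_le_one_left hwpos hs.2.le

lemma mono1 {w : ℝ → ℝ} (hw : IsRadialWeight w) {a b : ℝ} (ha : 0 ≤ a) (hab : a ≤ b) :
    hat1 w b ≤ hat1 w a := by
  refine setIntegral_mono_set (int1 hw ha) ?_ ?_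
  · filter_upwards [ae_restrict_mem measurableSet_Ioo] with s hs
    exact mul_nonneg (le_trans ha hs.1.le) (hw.1 s ⟨le_trans ha hs.1.le, hs.2⟩)
  · exact HasSubset.Subset.eventuallyLE (fun x hx => ⟨lt_of_le_of_lt hab hx.1, hx.2⟩)

lemma pos1 {w : ℝ → ℝ} (hw : IsRadialWeight w) {a : ℝ} (ha : a ∈ Set.Ico (0:ℝ) 1) :
    0 < hat1 w a := by
  obtain ⟨ha0, ha1⟩ := ha
  set t : ℝ := (a + 1) / 2 with htdef
  have hat : a < t := by rw [htdef]; linarith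
  have ht1 : t < 1 := by rw [htdef]; linarith
  have ht0 : 0 < t := lt_of_le_of_lt ha0 hat
  have hkey : t * hatw w t ≤ hat1 w t := by
    rw [hatw, ← MeasureTheory.integral_const_mul]
    refine setIntegral_mono_on ((intw hw ht0.le).const_mul t) (int1 hw ht0.le)
      measurableSet_Ioo fun s hs => ?_
    exact mul_le_mul_of_nonneg_right hs.1.le (hw.1 s ⟨le_trans ht0.le hs.1.le, hs.2⟩)
  have hpos : 0 < t * hatw w t := mul_pos ht0 (hw.2.2 t ⟨ht0.le, ht1⟩)
  exact lt_of_lt_of_le hpos (le_trans hkey (mono1 hw ha0 hat.le))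


theorem maximal_le_two_stieltjes_core (w : ℝ → ℝ) (hw : IsRadialWeight w)
    (f : ℂ → ℝ) (hfpos : ∀ z, 0 ≤ f z) :
    ∀ z : ℂ, z ∈ Metric.ball (0:ℂ) 1 → z ≠ 0 →
    (⨆ b ∈ Set.Ico (0:ℝ) ‖z‖,
      (∫⁻ s in Set.Ioo b 1, ENNReal.ofReal (|f ((s / ‖z‖) • z)| * (s * w s))) /
        ENNReal.ofReal (hat1 w b)) ≤
    2 * ∫⁻ s in Set.Ioo (0:ℝ) 1,
      ENNReal.ofReal (f ((s / ‖z‖) • z) * (s * w s)) /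
        ENNReal.ofReal (hat1 w s + hat1 w ‖z‖) := by
  intro z hz hz0
  have hz1 : ‖z‖ < 1 := mem_ball_zero_iff.mp hz
  have hznorm : 0 < ‖z‖ := norm_pos_iff.mpr hz0
  refine iSup₂_le fun b hb => ?_
  obtain ⟨hb0, hbz⟩ := hb
  have hb1 : b < 1 := hbz.trans hz1
  set g : ℝ → ℝ≥0∞ := fun s => ENNReal.ofReal (f ((s / ‖z‖) • z) * (s * w s)) with hg
  have habs : (∫⁻ s in Set.Ioo b 1, ENNReal.ofReal (|f ((s / ‖z‖) • z)| * (s * w s)))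
      = ∫⁻ s in Set.Ioo b 1, g s := by
    refine lintegral_congr fun s => ?_
    rw [hg, abs_of_nonneg (hfpos _)]
  rw [habs]
  set c := ENNReal.ofReal (hat1 w b) with hc
  have hcpos : 0 < hat1 w b := pos1 hw ⟨hb0, hb1⟩
  have hc0 : c ≠ 0 := (ENNReal.ofReal_pos.mpr hcpos).ne'
  have h2c : ENNReal.ofReal (2 * hat1 w b) = 2 * c := by
    rw [ENNReal.ofReal_mul (by norm_num), ENNReal.ofReal_ofNat]
  have key : ∫⁻ s in Set.Ioo b 1, g s / (2 * c) ≤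
      ∫⁻ s in Set.Ioo b 1, g s / ENNReal.ofReal (hat1 w s + hat1 w ‖z‖) := by
    refine setLIntegral_mono' measurableSet_Ioo fun s hs => ?_
    refine ENNReal.div_le_div_left ?_ _
    rw [← h2c]
    refine ENNReal.ofReal_le_ofReal ?_
    have h1 : hat1 w s ≤ hat1 w b := mono1 hw hb0 hs.1.le
    have h2 : hat1 w ‖z‖ ≤ hat1 w b := mono1 hw hb0 hbz.le
    linarith
  have e1 : ∫⁻ s in Set.Ioo b 1, g s / (2 * c) = (∫⁻ s in Set.Ioo b 1, g s) / (2 * c) := by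
    simp only [div_eq_mul_inv]
    exact lintegral_mul_const' _ _ (ENNReal.inv_ne_top.mpr (mul_ne_zero (by norm_num) hc0))
  have e2 : (∫⁻ s in Set.Ioo b 1, g s) / c
      = 2 * ((∫⁻ s in Set.Ioo b 1, g s) / (2 * c)) := by
    rw [← mul_div_assoc, ENNReal.mul_div_mul_left _ _ (by norm_num) (by norm_num)]
  calc (∫⁻ s in Set.Ioo b 1, g s) / c
      = 2 * ((∫⁻ s in Set.Ioo b 1, g s) / (2 * c)) := e2
    _ = 2 * ∫⁻ s in Set.Ioo b 1, g s / (2 * c) := by rw [e1]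
    _ ≤ 2 * ∫⁻ s in Set.Ioo b 1, g s / ENNReal.ofReal (hat1 w s + hat1 w ‖z‖) :=
        mul_le_mul_right key 2
    _ ≤ _ := mul_le_mul_right
        (lintegral_mono_set (Set.Ioo_subset_Ioo hb0 le_rfl)) 2

/-- Let `ω` be a radial weight and `f` a nonnegative measurable function on
`𝔻`. Then `M_{ω₁,rad}(f)(z) ≤ 2 S_{ω₁,rad}(f)(z)` for every `z ∈ 𝔻 \ {0}`. -/
theorem maximal_le_two_stieltjes (w : ℝ → ℝ) (hw : IsRadialWeight w)
    (f : ℂ → ℝ) (hf : Measurable f) (hfpos : ∀ z, 0 ≤ f z) :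
    ∀ z : ℂ, z ∈ Metric.ball (0:ℂ) 1 → z ≠ 0 → MradE w f z ≤ 2 * SE w f z := by
  simp only [MradE, SE]
  exact maximal_le_two_stieltjes_core w hw f hfpos

end
end

section
/- Let 1 < p < ∞, p' = p/(p−1), let ω be a radial weight, and let ν : [0,1) → (0,∞) be measurable with ν ∈ L¹_ω([0,1)) and A_p(ω,ων) < ∞. If 0 ≤ a < b < 1 satisfy ω̂₁(a) ≤ 2 ∫_a^b s ω(s) ds, then ∫_a¹ ν(s)^{−p'/p} s ω(s) ds ≤ (2 A_p(ω,ων))^{p'} ∫_a^b ν(s)^{−p'/p} s ω(s) ds. -/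
open MeasureTheory Set Metric
open scoped ENNReal NNReal

noncomputable section

/-- Lemma 5. Let `1 < p < ∞`, `ω` a radial weight, `ν : [0,1) → (0,∞)`
measurable with `ν ∈ L¹_ω([0,1))` and `A_p(ω,ων) < ∞`. If `0 ≤ a < b < 1` satisfy
`ω̂₁(a) ≤ 2 ∫_a^b s ω(s) ds`, then
`∫_a^1 ν^{-p'/p} s ω ds ≤ (2 A_p(ω,ων))^{p'} ∫_a^b ν^{-p'/p} s ω ds`. -/
theorem tail_sigma_estimate (p : ℝ) (hp : 1 < p) (w v : ℝ → ℝ)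
    (hw : IsRadialWeight w) (hvm : Measurable v) (hvpos : ∀ s ∈ Set.Ico (0:ℝ) 1, 0 < v s)
    (hvL1 : MeasureTheory.IntegrableOn (fun s => v s * w s) (Set.Ico (0:ℝ) 1))
    (hAp : Ap2 p w v < ⊤)
    (a b : ℝ) (ha : 0 ≤ a) (hab : a < b) (hb : b < 1)
    (hhat : hat1 w a ≤ 2 * ∫ s in Set.Ioo a b, s * w s) :
    (∫⁻ s in Set.Ioo a 1, ENNReal.ofReal (v s ^ (-(p / (p - 1)) / p) * (s * w s))) ≤
      (2 * Ap2 p w v) ^ (p / (p - 1)) *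
        ∫⁻ s in Set.Ioo a b, ENNReal.ofReal (v s ^ (-(p / (p - 1)) / p) * (s * w s)) := by
  have hp0 : (0:ℝ) < p := lt_trans one_pos hp
  have hp1 : (0:ℝ) < p - 1 := sub_pos.2 hp
  have hq0 : (0:ℝ) < p / (p - 1) := div_pos hp0 hp1
  have hpq : p.HolderConjugate (p / (p - 1)) :=
    (Real.holderConjugate_iff_eq_conjExponent hp).2 rfl
  set q : ℝ := p / (p - 1) with hqdef
  set e : ℝ := -q / p with hedef
  have ha1 : a < 1 := lt_trans hab hb
  have hsub1 : Set.Ioo a (1:ℝ) ⊆ Set.Ico (0:ℝ) 1 := fun x hx => ⟨le_trans ha hx.1.le, hx.2⟩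
  have hsubb : Set.Ioo a b ⊆ Set.Ico (0:ℝ) 1 :=
    fun x hx => ⟨le_trans ha hx.1.le, lt_trans hx.2 hb⟩
  have hsubb1 : Set.Ioo a b ⊆ Set.Ioo a (1:ℝ) := fun x hx => ⟨hx.1, lt_trans hx.2 hb⟩
  -- integrability of s * w s on Ico 0 1
  have hIsw : MeasureTheory.IntegrableOn (fun s => s * w s) (Set.Ico (0:ℝ) 1) := by
    apply hw.2.1.bdd_mul (c := 1) aestronglyMeasurable_id
    filter_upwards [ae_restrict_mem measurableSet_Ico] with x hx
    simpa [Real.norm_eq_abs, abs_of_nonneg hx.1] using hx.2.le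
  -- integrability of s * w s * v s on Ico 0 1
  have hIswv : MeasureTheory.IntegrableOn (fun s => s * w s * v s) (Set.Ico (0:ℝ) 1) := by
    have h2 : MeasureTheory.IntegrableOn (fun s => s * (v s * w s)) (Set.Ico (0:ℝ) 1) := by
      apply hvL1.bdd_mul (c := 1) aestronglyMeasurable_id
      filter_upwards [ae_restrict_mem measurableSet_Ico] with x hx
      simpa [Real.norm_eq_abs, abs_of_nonneg hx.1] using hx.2.le
    exact h2.congr_fun (fun x _ => by ring) measurableSet_Ico
  -- positivity of hat1 w a
  have hhat1pos : 0 < hat1 w a := by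
    set r : ℝ := (a + 1) / 2 with hrdef
    have hr0 : 0 < r := by positivity
    have har : a < r := by simp only [hrdef]; linarith
    have hr1 : r < 1 := by simp only [hrdef]; linarith
    have hsubr : Set.Ioo r (1:ℝ) ⊆ Set.Ioo a 1 := fun x hx => ⟨lt_trans har hx.1, hx.2⟩
    have h1 : r * hatw w r ≤ ∫ s in Set.Ioo r 1, s * w s := by
      rw [hatw, ← MeasureTheory.integral_const_mul]
      apply MeasureTheory.setIntegral_mono_on
      · exact (hw.2.1.mono_set (fun x hx => ⟨le_trans hr0.le hx.1.le, hx.2⟩)).const_mul r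
      · exact hIsw.mono_set (fun x hx => ⟨le_trans hr0.le hx.1.le, hx.2⟩)
      · exact measurableSet_Ioo
      · intro x hx
        exact mul_le_mul_of_nonneg_right hx.1.le
          (hw.1 x ⟨le_trans hr0.le hx.1.le, hx.2⟩)
    have h2 : (∫ s in Set.Ioo r 1, s * w s) ≤ ∫ s in Set.Ioo a 1, s * w s := by
      apply MeasureTheory.setIntegral_mono_set (hIsw.mono_set hsub1)
      · filter_upwards [ae_restrict_mem measurableSet_Ioo] with x hx
        exact mul_nonneg (le_trans ha hx.1.le) (hw.1 x (hsub1 hx))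
      · exact HasSubset.Subset.eventuallyLE hsubr
    have h3 : 0 < hatw w r := hw.2.2 r ⟨hr0.le, hr1⟩
    have : 0 < r * hatw w r := mul_pos hr0 h3
    rw [hat1]
    linarith
  -- M > 0
  have hM : 0 < ∫ s in Set.Ioo a b, s * w s := by linarith
  -- lintegral over Ioo a b of ofReal (s * w s) equals ofReal M
  have hMb : (∫⁻ s in Set.Ioo a b, ENNReal.ofReal (s * w s)) =
      ENNReal.ofReal (∫ s in Set.Ioo a b, s * w s) := by
    refine (MeasureTheory.ofReal_integral_eq_lintegral_ofReal
      (hIsw.mono_set hsubb) ?_).symm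
    filter_upwards [ae_restrict_mem measurableSet_Ioo] with x hx
    exact mul_nonneg (le_trans ha hx.1.le) (hw.1 x (hsubb hx))
  -- AE-measurability helpers
  have hwae : AEMeasurable w (volume.restrict (Set.Ico (0:ℝ) 1)) :=
    hw.2.1.aemeasurable
  have hwaeb : AEMeasurable w (volume.restrict (Set.Ioo a b)) :=
    hwae.mono_measure (Measure.restrict_mono hsubb le_rfl)
  have hFae : AEMeasurable (fun s => ENNReal.ofReal (s * w s * v s))
      (volume.restrict (Set.Ioo a b)) :=
    (((aemeasurable_id.mul hwaeb).mul hvm.aemeasurable)).ennreal_ofReal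
  have hGae : AEMeasurable (fun s => ENNReal.ofReal (s * w s * v s ^ e))
      (volume.restrict (Set.Ioo a b)) :=
    (((aemeasurable_id.mul hwaeb).mul
      ((hvm.pow_const e).aemeasurable))).ennreal_ofReal
  -- exponent facts
  have hq1 : (1:ℝ) - 1 / p = 1 / q := by
    rw [hqdef]; field_simp
  have h1pq : (1:ℝ) / p + 1 / q = 1 := by
    simpa [one_div] using hpq.inv_add_inv_eq_one
  have heq : (1:ℝ) / p + e * (1 / q) = 0 := by
    rw [hedef, hqdef]; field_simp; ring
  -- pointwise factorization a.e. on Ioo a b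
  have hptwise : (fun s => ENNReal.ofReal (s * w s)) =ᵐ[volume.restrict (Set.Ioo a b)]
      fun s => ENNReal.ofReal (s * w s * v s) ^ (1 / p) *
        ENNReal.ofReal (s * w s * v s ^ e) ^ (1 / q) := by
    filter_upwards [ae_restrict_mem measurableSet_Ioo] with s hs
    have hs0 : 0 < s := lt_of_le_of_lt ha hs.1
    have hws : 0 ≤ w s := hw.1 s (hsubb hs)
    have hvs : 0 < v s := hvpos s (hsubb hs)
    rcases hws.eq_or_lt with hw0 | hw0
    · have h1 : s * w s = 0 := by rw [← hw0, mul_zero]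
      rw [h1]
      simp only [zero_mul, ENNReal.ofReal_zero]
      rw [ENNReal.zero_rpow_of_pos (show (0:ℝ) < 1 / p by positivity), zero_mul]
    · have hA : 0 < s * w s := mul_pos hs0 hw0
      symm
      rw [ENNReal.ofReal_rpow_of_pos (by positivity),
        ENNReal.ofReal_rpow_of_pos (by positivity),
        ← ENNReal.ofReal_mul (by positivity)]
      congr 1
      rw [Real.mul_rpow hA.le hvs.le, Real.mul_rpow hA.le (Real.rpow_nonneg hvs.le _),
        ← Real.rpow_mul hvs.le, mul_mul_mul_comm, ← Real.rpow_add hA, ← Real.rpow_add hvs,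
        h1pq, heq, Real.rpow_one, Real.rpow_zero, mul_one]
  -- Hölder on Ioo a b
  have hHolder : (∫⁻ s in Set.Ioo a b, ENNReal.ofReal (s * w s)) ≤
      (∫⁻ s in Set.Ioo a b, ENNReal.ofReal (s * w s * v s)) ^ (1 / p) *
      (∫⁻ s in Set.Ioo a b, ENNReal.ofReal (s * w s * v s ^ e)) ^ (1 / q) := by
    have hkey := ENNReal.lintegral_mul_le_Lp_mul_Lq (volume.restrict (Set.Ioo a b)) hpq
      (hFae.pow_const (1 / p)) (hGae.pow_const (1 / q))
    simp only [Pi.mul_apply, ← ENNReal.rpow_mul, one_div_mul_cancel hp0.ne',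
      one_div_mul_cancel hq0.ne', ENNReal.rpow_one] at hkey
    calc (∫⁻ s in Set.Ioo a b, ENNReal.ofReal (s * w s))
        = ∫⁻ s in Set.Ioo a b, ENNReal.ofReal (s * w s * v s) ^ (1 / p) *
            ENNReal.ofReal (s * w s * v s ^ e) ^ (1 / q) := lintegral_congr_ae hptwise
      _ ≤ _ := hkey
  -- A_p bound at r = a
  have hApBound : (∫⁻ s in Set.Ioo a 1, ENNReal.ofReal (s * w s * v s)) ^ (1 / p) *
      (∫⁻ s in Set.Ioo a 1, ENNReal.ofReal (s * w s * v s ^ e)) ^ (1 - 1 / p) ≤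
      Ap2 p w v * ENNReal.ofReal (hat1 w a) := by
    have h : (∫⁻ s in Set.Ioo a 1, ENNReal.ofReal (s * w s * v s)) ^ (1 / p) *
        (∫⁻ s in Set.Ioo a 1, ENNReal.ofReal (s * w s * v s ^ e)) ^ (1 - 1 / p) /
        ENNReal.ofReal (hat1 w a) ≤ Ap2 p w v := by
      unfold Ap2
      have hmem : a ∈ Set.Ico (0:ℝ) 1 := ⟨ha, ha1⟩
      exact le_iSup₂ (f := fun r (_ : r ∈ Set.Ico (0:ℝ) 1) =>
        (∫⁻ s in Set.Ioo r 1, ENNReal.ofReal (s * w s * v s)) ^ (1 / p) *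
          (∫⁻ s in Set.Ioo r 1,
            ENNReal.ofReal (s * w s * v s ^ (-(p / (p - 1)) / p))) ^ (1 - 1 / p) /
          ENNReal.ofReal (hat1 w r)) a hmem
    exact (ENNReal.div_le_iff ((ENNReal.ofReal_pos.2 hhat1pos).ne')
      ENNReal.ofReal_ne_top).1 h
  -- finiteness and positivity of Nb
  have hNbtop : (∫⁻ s in Set.Ioo a b, ENNReal.ofReal (s * w s * v s)) ≠ ⊤ :=
    (IntegrableOn.setLIntegral_lt_top (hIswv.mono_set hsubb)).ne
  have hNbpos : 0 < ∫⁻ s in Set.Ioo a b, ENNReal.ofReal (s * w s * v s) := by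
    by_contra h
    push_neg at h
    have h0 : (∫⁻ s in Set.Ioo a b, ENNReal.ofReal (s * w s * v s)) = 0 :=
      le_antisymm h zero_le
    have hae := (lintegral_eq_zero_iff' hFae).1 h0
    have hzero : (fun s => s * w s) =ᵐ[volume.restrict (Set.Ioo a b)] 0 := by
      filter_upwards [hae, ae_restrict_mem measurableSet_Ioo] with x hx hx2
      have hx0 : x * w x * v x ≤ 0 := by
        simpa [ENNReal.ofReal_eq_zero] using hx
      have hs0 : 0 < x := lt_of_le_of_lt ha hx2.1
      have hws : 0 ≤ w x := hw.1 x (hsubb hx2)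
      have hvs : 0 < v x := hvpos x (hsubb hx2)
      have : x * w x * v x = 0 := le_antisymm hx0 (by positivity)
      have hxw : x * w x = 0 := by
        rcases mul_eq_zero.1 this with h' | h'
        · exact h'
        · exact absurd h' hvs.ne'
      simpa using hxw
    have : (∫ s in Set.Ioo a b, s * w s) = 0 := integral_eq_zero_of_ae hzero
    linarith
  -- main chain
  have hchain : (∫⁻ s in Set.Ioo a 1, ENNReal.ofReal (s * w s * v s ^ e)) ^ (1 / q) ≤
      (2 * Ap2 p w v) * (∫⁻ s in Set.Ioo a b, ENNReal.ofReal (s * w s * v s ^ e)) ^ (1 / q) := by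
    have hc : (∫⁻ s in Set.Ioo a 1, ENNReal.ofReal (s * w s * v s ^ e)) ^ (1 / q) *
        (∫⁻ s in Set.Ioo a b, ENNReal.ofReal (s * w s * v s)) ^ (1 / p) ≤
        ((2 * Ap2 p w v) * (∫⁻ s in Set.Ioo a b, ENNReal.ofReal (s * w s * v s ^ e)) ^ (1 / q)) *
        (∫⁻ s in Set.Ioo a b, ENNReal.ofReal (s * w s * v s)) ^ (1 / p) := by
      calc (∫⁻ s in Set.Ioo a 1, ENNReal.ofReal (s * w s * v s ^ e)) ^ (1 / q) *
            (∫⁻ s in Set.Ioo a b, ENNReal.ofReal (s * w s * v s)) ^ (1 / p)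
          ≤ (∫⁻ s in Set.Ioo a 1, ENNReal.ofReal (s * w s * v s ^ e)) ^ (1 / q) *
            (∫⁻ s in Set.Ioo a 1, ENNReal.ofReal (s * w s * v s)) ^ (1 / p) :=
            mul_le_mul_right (ENNReal.rpow_le_rpow
              (lintegral_mono_set hsubb1) (by positivity)) _
        _ = (∫⁻ s in Set.Ioo a 1, ENNReal.ofReal (s * w s * v s)) ^ (1 / p) *
            (∫⁻ s in Set.Ioo a 1, ENNReal.ofReal (s * w s * v s ^ e)) ^ (1 - 1 / p) := by
            rw [hq1, mul_comm]
        _ ≤ Ap2 p w v * ENNReal.ofReal (hat1 w a) := hApBound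
        _ ≤ Ap2 p w v * (2 * (∫⁻ s in Set.Ioo a b, ENNReal.ofReal (s * w s))) := by
            apply mul_le_mul_right
            rw [hMb]
            calc ENNReal.ofReal (hat1 w a)
                ≤ ENNReal.ofReal (2 * ∫ s in Set.Ioo a b, s * w s) :=
                  ENNReal.ofReal_le_ofReal hhat
              _ = 2 * ENNReal.ofReal (∫ s in Set.Ioo a b, s * w s) := by
                  rw [ENNReal.ofReal_mul (by norm_num)]; norm_num
        _ ≤ Ap2 p w v * (2 * ((∫⁻ s in Set.Ioo a b, ENNReal.ofReal (s * w s * v s)) ^ (1 / p) *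
            (∫⁻ s in Set.Ioo a b, ENNReal.ofReal (s * w s * v s ^ e)) ^ (1 / q))) :=
            mul_le_mul_right (mul_le_mul_right hHolder _) _
        _ = ((2 * Ap2 p w v) * (∫⁻ s in Set.Ioo a b, ENNReal.ofReal (s * w s * v s ^ e)) ^ (1 / q)) *
            (∫⁻ s in Set.Ioo a b, ENNReal.ofReal (s * w s * v s)) ^ (1 / p) := by ring
    exact (ENNReal.mul_le_mul_iff_left
      (ENNReal.rpow_pos hNbpos hNbtop).ne'
      (ENNReal.rpow_ne_top_of_nonneg (by positivity) hNbtop)).1 hc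
  -- conclude by raising to the power q
  have hfinal := ENNReal.rpow_le_rpow hchain hq0.le
  rw [← ENNReal.rpow_mul, one_div_mul_cancel hq0.ne', ENNReal.rpow_one,
    ENNReal.mul_rpow_of_nonneg _ _ hq0.le, ← ENNReal.rpow_mul,
    one_div_mul_cancel hq0.ne', ENNReal.rpow_one] at hfinal
  have hswap1 : (∫⁻ s in Set.Ioo a 1, ENNReal.ofReal (v s ^ e * (s * w s))) =
      ∫⁻ s in Set.Ioo a 1, ENNReal.ofReal (s * w s * v s ^ e) :=
    lintegral_congr fun s => by rw [mul_comm]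
  have hswapb : (∫⁻ s in Set.Ioo a b, ENNReal.ofReal (v s ^ e * (s * w s))) =
      ∫⁻ s in Set.Ioo a b, ENNReal.ofReal (s * w s * v s ^ e) :=
    lintegral_congr fun s => by rw [mul_comm]
  rw [hswap1, hswapb]
  exact hfinal



end
end

section
/- Let η be a radial weight and 1 < p < ∞. Then there exists a constant C > 0, depending only on p, such that ∫₀¹ (M_η f(t))^p η(t) dt ≤ C ∫₀¹ |f(t)|^p η(t) dt for every f ∈ L^p((0,1), η(s)ds). -/
open MeasureTheory Set Metric
open scoped ENNReal NNReal

noncomputable section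

/-- The one-dimensional maximal function
`M_η f(t) = sup_{0 ≤ b < t} (1/η̂(b)) ∫_b^1 |f(s)| η(s) ds`. -/
def Mone (η : ℝ → ℝ) (f : ℝ → ℝ) (t : ℝ) : ℝ≥0∞ :=
  ⨆ b ∈ Set.Ico (0:ℝ) t,
    (∫⁻ s in Set.Ioo b 1, ENNReal.ofReal (|f s| * η s)) / ENNReal.ofReal (hatw η b)

section Nice

lemma hatw_eq (η : ℝ → ℝ) (h0 : ∀ s, 0 ≤ η s) (hint : Integrable η) (b : ℝ) :
    ENNReal.ofReal (hatw η b)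
      = (volume.withDensity fun s => ENNReal.ofReal (η s)) (Set.Ioo b 1) := by
  rw [withDensity_apply _ measurableSet_Ioo, hatw,
    MeasureTheory.ofReal_integral_eq_lintegral_ofReal hint.integrableOn
      (Filter.Eventually.of_forall fun s => h0 s)]

lemma Mone_eq (η : ℝ → ℝ) (h0 : ∀ s, 0 ≤ η s) (hint : Integrable η) (g : ℝ → ℝ) (t : ℝ) :
    Mone η g t = ⨆ b ∈ Set.Ico (0:ℝ) t,
      (volume.withDensity fun s => ENNReal.ofReal (|g s| * η s)) (Set.Ioo b 1) /
        (volume.withDensity fun s => ENNReal.ofReal (η s)) (Set.Ioo b 1) := by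
  simp only [Mone]
  refine iSup_congr fun b => iSup_congr fun _ => ?_
  rw [withDensity_apply _ measurableSet_Ioo, hatw_eq η h0 hint]

lemma weak_lemma (η : ℝ → ℝ) (h0 : ∀ s, 0 ≤ η s) (hint : Integrable η)
    (hpos : ∀ r ∈ Set.Ico (0:ℝ) 1, 0 < hatw η r) (g : ℝ → ℝ) (c : ℝ≥0∞) (hc0 : c ≠ 0) (hctop : c ≠ ⊤) :
    (volume.withDensity fun s => ENNReal.ofReal (η s))
        {t | t ∈ Set.Ioo (0:ℝ) 1 ∧ c < Mone η g t}
      ≤ c⁻¹ * ∫⁻ s in Set.Ioo (0:ℝ) 1, ENNReal.ofReal (|g s| * η s) := by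
  set ω : Measure ℝ := volume.withDensity fun s => ENNReal.ofReal (η s) with hω
  set m : Measure ℝ := volume.withDensity fun s => ENNReal.ofReal (|g s| * η s) with hm
  have hωfin : ∀ b : ℝ, ω (Set.Ioo b 1) ≠ ∞ := by
    intro b; rw [← hatw_eq η h0 hint]; exact ENNReal.ofReal_ne_top
  have hωpos : ∀ b ∈ Set.Ico (0:ℝ) 1, ω (Set.Ioo b 1) ≠ 0 := by
    intro b hb; rw [← hatw_eq η h0 hint]
    exact (ENNReal.ofReal_pos.2 (hpos b hb)).ne'
  set S : Set ℝ := {b : ℝ | 0 ≤ b ∧ c * ω (Set.Ioo b 1) < m (Set.Ioo b 1)} with hS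
  have hES : ∀ t ∈ {t | t ∈ Set.Ioo (0:ℝ) 1 ∧ c < Mone η g t}, ∃ b ∈ S, b < t := by
    rintro t ⟨ht, hlt⟩
    rw [Mone_eq η h0 hint] at hlt
    rw [lt_iSup_iff] at hlt
    obtain ⟨b, hlt⟩ := hlt
    rw [lt_iSup_iff] at hlt
    obtain ⟨hb, hlt⟩ := hlt
    rw [ENNReal.lt_div_iff_mul_lt (Or.inl (hωpos b ⟨hb.1, hb.2.trans ht.2⟩))
      (Or.inl (hωfin b))] at hlt
    exact ⟨b, ⟨hb.1, hlt⟩, hb.2⟩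
  rcases eq_empty_or_nonempty S with hSe | hSne
  · have : {t | t ∈ Set.Ioo (0:ℝ) 1 ∧ c < Mone η g t} = ∅ := by
      rw [eq_empty_iff_forall_notMem]
      intro t ht
      obtain ⟨b, hbS, _⟩ := hES t ht
      simp [hSe] at hbS
    rw [this]; simp
  · have hbdd : BddBelow S := ⟨0, fun x hx => hx.1⟩
    set β := sInf S with hβ
    have hβ0 : 0 ≤ β := le_csInf hSne fun b hb => hb.1
    have claim3 : c * ω (Set.Ioo β 1) ≤ m (Set.Ioo β 1) := by
      have key : ∀ ε : ℝ, 0 < ε → c * ω (Set.Ioo (β + ε) 1) ≤ m (Set.Ioo β 1) := by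
        intro ε hε
        obtain ⟨b, hbS, hbε⟩ := exists_lt_of_csInf_lt hSne (by linarith : sInf S < β + ε)
        calc c * ω (Set.Ioo (β + ε) 1)
            ≤ c * ω (Set.Ioo b 1) :=
              mul_le_mul_right (measure_mono (Set.Ioo_subset_Ioo hbε.le le_rfl)) _
          _ ≤ m (Set.Ioo b 1) := hbS.2.le
          _ ≤ m (Set.Ioo β 1) :=
              measure_mono (Set.Ioo_subset_Ioo (csInf_le hbdd hbS) le_rfl)
      have hU : Set.Ioo β 1 = ⋃ n : ℕ, Set.Ioo (β + ((n:ℝ) + 1)⁻¹) 1 := by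
        ext x
        simp only [Set.mem_Ioo, Set.mem_iUnion]
        constructor
        · rintro ⟨hx1, hx2⟩
          obtain ⟨n, hn⟩ := exists_nat_one_div_lt (by linarith : 0 < x - β)
          exact ⟨n, by rw [one_div] at hn; linarith, hx2⟩
        · rintro ⟨n, hn1, hn2⟩
          have : (0:ℝ) < ((n:ℝ) + 1)⁻¹ := by positivity
          exact ⟨by linarith, hn2⟩
      have hdir : Directed (· ⊆ ·) fun n : ℕ => Set.Ioo (β + ((n:ℝ) + 1)⁻¹) 1 := by
        apply Monotone.directed_le
        intro n k hnk
        apply Set.Ioo_subset_Ioo _ le_rfl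
        have hnk' : (n:ℝ) ≤ (k:ℝ) := Nat.cast_le.2 hnk
        have : ((k:ℝ) + 1)⁻¹ ≤ ((n:ℝ) + 1)⁻¹ := by
          apply inv_anti₀ (by positivity)
          linarith
        linarith
      have hωU : ω (Set.Ioo β 1) = ⨆ n : ℕ, ω (Set.Ioo (β + ((n:ℝ) + 1)⁻¹) 1) := by
        rw [hU, hdir.measure_iUnion]
      rw [hωU, ENNReal.mul_iSup]
      exact iSup_le fun n => key _ (by positivity)
    have hEβ : {t | t ∈ Set.Ioo (0:ℝ) 1 ∧ c < Mone η g t} ⊆ Set.Ioo β 1 := by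
      intro t ht
      obtain ⟨b, hbS, hbt⟩ := hES t ht
      exact ⟨lt_of_le_of_lt (csInf_le hbdd hbS) hbt, ht.1.2⟩
    calc ω {t | t ∈ Set.Ioo (0:ℝ) 1 ∧ c < Mone η g t}
        ≤ ω (Set.Ioo β 1) := measure_mono hEβ
      _ ≤ c⁻¹ * m (Set.Ioo β 1) := by
          rw [← ENNReal.div_eq_inv_mul]
          rw [ENNReal.le_div_iff_mul_le (Or.inl hc0) (Or.inl hctop), mul_comm]
          exact claim3
      _ ≤ c⁻¹ * m (Set.Ioo 0 1) :=
          mul_le_mul_right (measure_mono (Set.Ioo_subset_Ioo hβ0 le_rfl)) _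
      _ = c⁻¹ * ∫⁻ s in Set.Ioo (0:ℝ) 1, ENNReal.ofReal (|g s| * η s) := by
          rw [withDensity_apply _ measurableSet_Ioo]


lemma Mone_mono (η f : ℝ → ℝ) : Monotone (Mone η f) := by
  intro t1 t2 h
  exact biSup_mono fun b hb => ⟨hb.1, lt_of_lt_of_le hb.2 h⟩

lemma split_le (η : ℝ → ℝ) (hm : Measurable η) (h0 : ∀ s, 0 ≤ η s) (hint : Integrable η)
    (hpos : ∀ r ∈ Set.Ico (0:ℝ) 1, 0 < hatw η r)
    (f : ℝ → ℝ) (hf : Measurable f) (lam : ℝ) (hlam : 0 < lam) (t : ℝ) (ht : t ≤ 1) :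
    Mone η f t ≤ Mone η (fun s => if lam/2 < |f s| then f s else 0) t
      + ENNReal.ofReal (lam/2) := by
  set g : ℝ → ℝ := fun s => if lam/2 < |f s| then f s else 0 with hg
  refine iSup₂_le fun b hb => ?_
  have hb1 : b ∈ Set.Ico (0:ℝ) 1 := ⟨hb.1, lt_of_lt_of_le hb.2 ht⟩
  set d : ℝ≥0∞ := ENNReal.ofReal (hatw η b) with hd
  have hd0 : d ≠ 0 := (ENNReal.ofReal_pos.2 (hpos b hb1)).ne'
  have hdtop : d ≠ ⊤ := ENNReal.ofReal_ne_top
  have hgm : Measurable g := by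
    apply Measurable.ite _ hf measurable_const
    exact measurableSet_lt measurable_const hf.abs
  have hnum : (∫⁻ s in Set.Ioo b 1, ENNReal.ofReal (|f s| * η s))
      ≤ (∫⁻ s in Set.Ioo b 1, ENNReal.ofReal (|g s| * η s))
        + ENNReal.ofReal (lam/2) * d := by
    have hptwise : ∀ s, ENNReal.ofReal (|f s| * η s)
        ≤ ENNReal.ofReal (|g s| * η s) + ENNReal.ofReal (lam/2) * ENNReal.ofReal (η s) := by
      intro s
      by_cases hc : lam/2 < |f s|
      · have : g s = f s := by simp [hg, hc]
        rw [this]; exact le_self_add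
      · push_neg at hc
        have : ENNReal.ofReal (|f s| * η s) ≤ ENNReal.ofReal (lam/2) * ENNReal.ofReal (η s) := by
          rw [← ENNReal.ofReal_mul (by linarith : (0:ℝ) ≤ lam/2)]
          exact ENNReal.ofReal_le_ofReal (mul_le_mul_of_nonneg_right hc (h0 s))
        exact le_add_left this
    calc (∫⁻ s in Set.Ioo b 1, ENNReal.ofReal (|f s| * η s))
        ≤ ∫⁻ s in Set.Ioo b 1,
            (ENNReal.ofReal (|g s| * η s) + ENNReal.ofReal (lam/2) * ENNReal.ofReal (η s)) :=
          lintegral_mono hptwise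
      _ = (∫⁻ s in Set.Ioo b 1, ENNReal.ofReal (|g s| * η s))
          + ∫⁻ s in Set.Ioo b 1, ENNReal.ofReal (lam/2) * ENNReal.ofReal (η s) :=
          lintegral_add_left ((hgm.abs.mul hm).ennreal_ofReal) _
      _ = (∫⁻ s in Set.Ioo b 1, ENNReal.ofReal (|g s| * η s)) + ENNReal.ofReal (lam/2) * d := by
          rw [lintegral_const_mul _ hm.ennreal_ofReal, hd, hatw_eq η h0 hint,
            withDensity_apply _ measurableSet_Ioo]
  calc (∫⁻ s in Set.Ioo b 1, ENNReal.ofReal (|f s| * η s)) / d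
      ≤ ((∫⁻ s in Set.Ioo b 1, ENNReal.ofReal (|g s| * η s)) + ENNReal.ofReal (lam/2) * d) / d :=
        ENNReal.div_le_div_right hnum d
    _ = (∫⁻ s in Set.Ioo b 1, ENNReal.ofReal (|g s| * η s)) / d
        + ENNReal.ofReal (lam/2) * d / d := by
        rw [ENNReal.add_div]
    _ ≤ Mone η g t + ENNReal.ofReal (lam/2) := by
        gcongr
        · exact le_iSup₂ (f := fun b (_ : b ∈ Set.Ico (0:ℝ) t) =>
            (∫⁻ s in Set.Ioo b 1, ENNReal.ofReal (|g s| * η s)) / ENNReal.ofReal (hatw η b)) b hb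
        · rw [mul_div_assoc, ENNReal.div_self hd0 hdtop, mul_one]


lemma dist_le (η : ℝ → ℝ) (hm : Measurable η) (h0 : ∀ s, 0 ≤ η s) (hint : Integrable η)
    (hpos : ∀ r ∈ Set.Ico (0:ℝ) 1, 0 < hatw η r)
    (f : ℝ → ℝ) (hf : Measurable f) (lam : ℝ) (hlam : 0 < lam) :
    (volume.withDensity fun s => ENNReal.ofReal (η s))
        {t | t ∈ Set.Ioo (0:ℝ) 1 ∧ ENNReal.ofReal lam < Mone η f t}
      ≤ (ENNReal.ofReal (lam/2))⁻¹ *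
          ∫⁻ s in Set.Ioo (0:ℝ) 1,
            (if lam/2 < |f s| then ENNReal.ofReal (|f s| * η s) else 0) := by
  set g : ℝ → ℝ := fun s => if lam/2 < |f s| then f s else 0 with hg
  have hsub : {t | t ∈ Set.Ioo (0:ℝ) 1 ∧ ENNReal.ofReal lam < Mone η f t}
      ⊆ {t | t ∈ Set.Ioo (0:ℝ) 1 ∧ ENNReal.ofReal (lam/2) < Mone η g t} := by
    rintro t ⟨ht, hlt⟩
    refine ⟨ht, ?_⟩
    by_contra hcon
    push_neg at hcon
    have := (split_le η hm h0 hint hpos f hf lam hlam t ht.2.le).trans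
      (add_le_add_left hcon _)
    rw [← ENNReal.ofReal_add (by linarith) (by linarith)] at this
    have h2 : lam/2 + lam/2 = lam := by ring
    rw [h2] at this
    exact absurd (lt_of_lt_of_le hlt this) (lt_irrefl _)
  have hgabs : ∀ s, ENNReal.ofReal (|g s| * η s)
      = (if lam/2 < |f s| then ENNReal.ofReal (|f s| * η s) else 0) := by
    intro s
    by_cases hc : lam/2 < |f s| <;> simp [hg, hc]
  calc (volume.withDensity fun s => ENNReal.ofReal (η s))
        {t | t ∈ Set.Ioo (0:ℝ) 1 ∧ ENNReal.ofReal lam < Mone η f t}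
      ≤ (volume.withDensity fun s => ENNReal.ofReal (η s))
        {t | t ∈ Set.Ioo (0:ℝ) 1 ∧ ENNReal.ofReal (lam/2) < Mone η g t} := measure_mono hsub
    _ ≤ (ENNReal.ofReal (lam/2))⁻¹ * ∫⁻ s in Set.Ioo (0:ℝ) 1, ENNReal.ofReal (|g s| * η s) :=
        weak_lemma η h0 hint hpos g _ (ENNReal.ofReal_pos.2 (by linarith)).ne'
          ENNReal.ofReal_ne_top
    _ = (ENNReal.ofReal (lam/2))⁻¹ *
          ∫⁻ s in Set.Ioo (0:ℝ) 1,
            (if lam/2 < |f s| then ENNReal.ofReal (|f s| * η s) else 0) := by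
        congr 1
        exact lintegral_congr fun s => hgabs s

lemma inner_int (p : ℝ) (hp : 1 < p) (a : ℝ) (ha : 0 ≤ a) :
    (∫⁻ lam in Set.Ioi (0:ℝ),
        (if lam/2 < a then (ENNReal.ofReal (lam/2))⁻¹ * ENNReal.ofReal (p * lam^(p-1)) else 0))
      = ENNReal.ofReal (2^p * p/(p-1) * a^(p-1)) := by
  have hind : ∀ lam : ℝ,
      (if lam/2 < a then (ENNReal.ofReal (lam/2))⁻¹ * ENNReal.ofReal (p * lam^(p-1)) else 0)
        = Set.indicator (Set.Iio (2*a))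
            (fun lam => (ENNReal.ofReal (lam/2))⁻¹ * ENNReal.ofReal (p * lam^(p-1))) lam := by
    intro lam
    rw [Set.indicator_apply]
    congr 1
    simp only [Set.mem_Iio, eq_iff_iff]
    constructor <;> intro h <;> linarith
  rw [lintegral_congr hind, lintegral_indicator measurableSet_Iio,
    Measure.restrict_restrict measurableSet_Iio]
  have hIoo : Set.Iio (2*a) ∩ Set.Ioi 0 = Set.Ioo (0:ℝ) (2*a) := by
    ext x; simp [Set.mem_Ioo, and_comm]
  rw [hIoo]
  have hcongr : ∀ lam ∈ Set.Ioo (0:ℝ) (2*a),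
      (ENNReal.ofReal (lam/2))⁻¹ * ENNReal.ofReal (p * lam^(p-1))
        = ENNReal.ofReal (2 * p * lam^(p-2)) := by
    intro lam hlam
    have hl : (0:ℝ) < lam := hlam.1
    rw [← ENNReal.ofReal_inv_of_pos (by linarith [hlam.1] : (0:ℝ) < lam/2),
      ← ENNReal.ofReal_mul (by positivity)]
    congr 1
    have h1 : lam ^ (p-1) = lam ^ (p-2) * lam := by
      rw [show p - 1 = (p-2) + 1 by ring, Real.rpow_add hlam.1, Real.rpow_one]
    have hlam0 : lam ≠ 0 := ne_of_gt hlam.1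
    rw [h1]
    field_simp
  rw [setLIntegral_congr_fun measurableSet_Ioo hcongr]
  have hint2 : IntegrableOn (fun lam => 2 * p * lam^(p-2)) (Set.Ioo (0:ℝ) (2*a)) := by
    have := (intervalIntegral.intervalIntegrable_rpow' (r := p-2) (by linarith)
      (a := 0) (b := 2*a)).const_mul (2*p)
    exact this.1.mono_set Set.Ioo_subset_Ioc_self
  rw [← MeasureTheory.ofReal_integral_eq_lintegral_ofReal hint2 ?_]
  · congr 1
    have : ∫ lam in Set.Ioo (0:ℝ) (2*a), 2 * p * lam^(p-2)
        = ∫ lam in (0:ℝ)..(2*a), 2 * p * lam^(p-2) := by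
      rw [intervalIntegral.integral_of_le (by linarith : (0:ℝ) ≤ 2*a),
        ← MeasureTheory.integral_Ioc_eq_integral_Ioo]
    rw [this, intervalIntegral.integral_const_mul, integral_rpow (Or.inl (by linarith)),
      Real.zero_rpow (by linarith : p - 2 + 1 ≠ 0)]
    have h2a : (2*a) ^ (p-2+1) = 2^(p-1) * a^(p-1) := by
      rw [show p-2+1 = p-1 by ring, Real.mul_rpow (by norm_num) ha]
    rw [h2a]
    have h2p : (2:ℝ)^(p-1) = 2^p / 2 := by
      rw [Real.rpow_sub (by norm_num), Real.rpow_one]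
    rw [h2p]
    have hp1 : p - 1 ≠ 0 := by linarith
    rw [show p-2+1 = p-1 by ring]
    field_simp
    ring
  · filter_upwards [ae_restrict_mem measurableSet_Ioo] with lam hlam
    have := hlam.1
    positivity


lemma main_nice (p : ℝ) (hp : 1 < p) (η : ℝ → ℝ) (hm : Measurable η) (h0 : ∀ s, 0 ≤ η s)
    (hint : Integrable η) (hpos : ∀ r ∈ Set.Ico (0:ℝ) 1, 0 < hatw η r)
    (f : ℝ → ℝ) (hf : Measurable f) :
    (∫⁻ t in Set.Ioo (0:ℝ) 1, Mone η f t ^ p * ENNReal.ofReal (η t)) ≤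
      ENNReal.ofReal (2^p * p / (p-1)) *
        ∫⁻ t in Set.Ioo (0:ℝ) 1, ENNReal.ofReal (|f t| ^ p * η t) := by
  have hp0 : (0:ℝ) < p := by linarith
  set W : ℝ → ℝ≥0∞ := fun s => ENNReal.ofReal (η s) with hW
  have hWm : Measurable W := hm.ennreal_ofReal
  set ω : Measure ℝ := volume.withDensity W with hω
  set μ : Measure ℝ := ω.restrict (Set.Ioo 0 1) with hμdef
  have hMmeas : Measurable (Mone η f) := (Mone_mono η f).measurable
  have hμint : ∀ X : ℝ → ℝ≥0∞, Measurable X →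
      ∫⁻ t, X t ∂μ = ∫⁻ t in Set.Ioo (0:ℝ) 1, X t * W t := by
    intro X hX
    rw [hμdef, hω, restrict_withDensity measurableSet_Ioo,
      lintegral_withDensity_eq_lintegral_mul _ hWm hX]
    exact lintegral_congr fun t => mul_comm _ _
  set v : ℕ → ℝ → ℝ≥0∞ := fun N t => min (Mone η f t) N with hv
  set u : ℕ → ℝ → ℝ := fun N t => (v N t).toReal with hu
  have hvmeas : ∀ N, Measurable (v N) := fun N => hMmeas.min measurable_const
  have hvtop : ∀ N t, v N t ≠ ⊤ := fun N t =>
    (lt_of_le_of_lt (min_le_right _ _) (ENNReal.natCast_lt_top N)).ne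
  have humeas : ∀ N, Measurable (u N) := fun N => (hvmeas N).ennreal_toReal
  have hofReal_u : ∀ N t, ENNReal.ofReal (u N t) = v N t := fun N t =>
    ENNReal.ofReal_toReal (hvtop N t)
  -- sup of truncations
  have hsup : ∀ t, (⨆ N : ℕ, v N t ^ p) = Mone η f t ^ p := by
    intro t
    rcases eq_or_ne (Mone η f t) ⊤ with hT | hT
    · have hvN : ∀ N : ℕ, v N t = (N : ℝ≥0∞) := by
        intro N; rw [hv]; simp [hT]
      simp only [hvN, hT, ENNReal.top_rpow_of_pos hp0]
      have h1 : (⨆ N : ℕ, (N : ℝ≥0∞)) ≤ ⨆ N : ℕ, (N : ℝ≥0∞) ^ p := by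
        refine iSup_mono fun N => ?_
        rcases Nat.eq_zero_or_pos N with h | h
        · simp [h]
        · have hN1 : (1:ℝ≥0∞) ≤ (N : ℝ≥0∞) := by exact_mod_cast h
          calc (N : ℝ≥0∞) = (N : ℝ≥0∞) ^ (1:ℝ) := (ENNReal.rpow_one _).symm
            _ ≤ (N : ℝ≥0∞) ^ p := ENNReal.rpow_le_rpow_of_exponent_le hN1 hp.le
      have h2 : (⨆ N : ℕ, (N : ℝ≥0∞)) = ⊤ := by
        rw [ENNReal.iSup_natCast]
      rw [eq_top_iff]
      rw [h2] at h1
      exact h1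
    · obtain ⟨N, hN⟩ := ENNReal.exists_nat_gt hT
      refine le_antisymm (iSup_le fun N => ENNReal.rpow_le_rpow (min_le_left _ _) hp0.le) ?_
      refine le_iSup_of_le N ?_
      rw [hv]
      simp only []
      rw [min_eq_left hN.le]
  -- reduce to truncations
  have hstepA : (∫⁻ t in Set.Ioo (0:ℝ) 1, Mone η f t ^ p * ENNReal.ofReal (η t))
      = ⨆ N : ℕ, ∫⁻ t, v N t ^ p ∂μ := by
    rw [← hμint _ (hMmeas.pow_const p)]
    rw [show (fun t => Mone η f t ^ p) = fun t => ⨆ N : ℕ, v N t ^ p by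
      funext t; exact (hsup t).symm]
    rw [lintegral_iSup (fun N => (hvmeas N).pow_const p)]
    intro N M hNM t
    exact ENNReal.rpow_le_rpow (min_le_min le_rfl (by exact_mod_cast hNM)) hp0.le
  rw [hstepA]
  refine iSup_le fun N => ?_
  -- layer cake for truncation
  have hlayer : ∫⁻ t, v N t ^ p ∂μ
      = ∫⁻ lam in Set.Ioi (0:ℝ), μ {a | lam < u N a} * ENNReal.ofReal (p * lam ^ (p-1)) := by
    have hvp : ∀ t, v N t ^ p = ENNReal.ofReal (∫ s in (0:ℝ)..(u N t), p * s ^ (p-1)) := by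
      intro t
      have hb : (0:ℝ) ≤ u N t := ENNReal.toReal_nonneg
      have : ∫ s in (0:ℝ)..(u N t), p * s ^ (p-1) = u N t ^ p := by
        rw [intervalIntegral.integral_const_mul, integral_rpow (Or.inl (by linarith)),
          Real.zero_rpow (by linarith : p - 1 + 1 ≠ 0), show p-1+1 = p by ring]
        field_simp
        simp
      rw [this, ← hofReal_u N t, ENNReal.ofReal_rpow_of_nonneg hb hp0.le]
    rw [lintegral_congr hvp]
    exact lintegral_comp_eq_lintegral_meas_lt_mul μ
      (Filter.Eventually.of_forall fun t => ENNReal.toReal_nonneg)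
      (humeas N).aemeasurable
      (fun T hT => (intervalIntegral.intervalIntegrable_rpow' (by linarith)).const_mul p)
      ((ae_restrict_mem measurableSet_Ioi).mono fun lam hlam => by
        have : (0:ℝ) < lam := hlam
        positivity)
  rw [hlayer]
  set c : ℝ → ℝ≥0∞ :=
    fun lam => (ENNReal.ofReal (lam/2))⁻¹ * ENNReal.ofReal (p * lam ^ (p-1)) with hc
  set K : ℝ → ℝ≥0∞ := fun lam => ∫⁻ s in Set.Ioo (0:ℝ) 1,
    (if lam/2 < |f s| then ENNReal.ofReal (|f s| * η s) else 0) with hK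
  have hdist : ∀ lam : ℝ, 0 < lam →
      μ {a | lam < u N a} ≤ (ENNReal.ofReal (lam/2))⁻¹ * K lam := by
    intro lam hlam
    have hsub : {a | lam < u N a} ∩ Set.Ioo (0:ℝ) 1
        ⊆ {t | t ∈ Set.Ioo (0:ℝ) 1 ∧ ENNReal.ofReal lam < Mone η f t} := by
      rintro a ⟨ha, haI⟩
      refine ⟨haI, ?_⟩
      have h1 : ENNReal.ofReal lam < ENNReal.ofReal (u N a) :=
        (ENNReal.ofReal_lt_ofReal_iff (lt_trans hlam ha)).2 ha
      rw [hofReal_u] at h1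
      exact lt_of_lt_of_le h1 (min_le_left _ _)
    calc μ {a | lam < u N a} = ω ({a | lam < u N a} ∩ Set.Ioo (0:ℝ) 1) :=
          Measure.restrict_apply' measurableSet_Ioo
      _ ≤ ω {t | t ∈ Set.Ioo (0:ℝ) 1 ∧ ENNReal.ofReal lam < Mone η f t} := measure_mono hsub
      _ ≤ (ENNReal.ofReal (lam/2))⁻¹ * K lam := dist_le η hm h0 hint hpos f hf lam hlam
  have hbound : ∫⁻ lam in Set.Ioi (0:ℝ), μ {a | lam < u N a} * ENNReal.ofReal (p * lam ^ (p-1))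
      ≤ ∫⁻ lam in Set.Ioi (0:ℝ), c lam * K lam := by
    refine setLIntegral_mono' measurableSet_Ioi fun lam hlam => ?_
    rw [hc]
    calc μ {a | lam < u N a} * ENNReal.ofReal (p * lam ^ (p-1))
        ≤ ((ENNReal.ofReal (lam/2))⁻¹ * K lam) * ENNReal.ofReal (p * lam ^ (p-1)) :=
          mul_le_mul_left (hdist lam hlam) _
      _ = (ENNReal.ofReal (lam/2))⁻¹ * ENNReal.ofReal (p * lam ^ (p-1)) * K lam := by ring
  refine le_trans hbound ?_
  -- now compute the double integral exactly
  have hcfin : ∀ lam : ℝ, 0 < lam → c lam ≠ ⊤ := by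
    intro lam hlam
    rw [hc]
    exact ENNReal.mul_ne_top
      (ENNReal.inv_ne_top.2 (ENNReal.ofReal_pos.2 (by linarith)).ne') ENNReal.ofReal_ne_top
  have hswap : ∫⁻ lam in Set.Ioi (0:ℝ), c lam * K lam
      = ∫⁻ s in Set.Ioo (0:ℝ) 1, ∫⁻ lam in Set.Ioi (0:ℝ),
          (if lam/2 < |f s| then c lam else 0) * ENNReal.ofReal (|f s| * η s) := by
    have hstep1 : ∀ lam ∈ Set.Ioi (0:ℝ), c lam * K lam
        = ∫⁻ s in Set.Ioo (0:ℝ) 1,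
            (if lam/2 < |f s| then c lam else 0) * ENNReal.ofReal (|f s| * η s) := by
      intro lam hlam
      rw [hK, ← lintegral_const_mul' _ _ (hcfin lam hlam)]
      refine lintegral_congr fun s => ?_
      by_cases hcond : lam/2 < |f s| <;> simp [hcond]
    rw [setLIntegral_congr_fun measurableSet_Ioi hstep1]
    apply lintegral_lintegral_swap
    apply Measurable.aemeasurable
    have hset : MeasurableSet {q : ℝ × ℝ | q.1/2 < |f q.2|} :=
      measurableSet_lt (measurable_fst.div_const 2) (hf.comp measurable_snd).abs
    have hcmeas : Measurable c := by
      rw [hc]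
      exact ((measurable_id.div_const 2).ennreal_ofReal.inv).mul
        ((measurable_const.mul
          ((Real.continuous_rpow_const (by linarith : (0:ℝ) ≤ p-1)).measurable)).ennreal_ofReal)
    exact ((Measurable.ite hset (hcmeas.comp measurable_fst) measurable_const).mul
      (((hf.comp measurable_snd).abs.mul (hm.comp measurable_snd)).ennreal_ofReal))
  rw [hswap]
  have hinner : ∀ s : ℝ,
      (∫⁻ lam in Set.Ioi (0:ℝ),
        (if lam/2 < |f s| then c lam else 0) * ENNReal.ofReal (|f s| * η s))
      = ENNReal.ofReal (2^p * p/(p-1)) * ENNReal.ofReal (|f s| ^ p * η s) := by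
    intro s
    rw [lintegral_mul_const' _ _ ENNReal.ofReal_ne_top, hc]
    rw [inner_int p hp |f s| (abs_nonneg _)]
    have hC' : (0:ℝ) ≤ 2^p * p/(p-1) := by
      apply div_nonneg _ (by linarith)
      positivity
    rw [← ENNReal.ofReal_mul (mul_nonneg hC' (Real.rpow_nonneg (abs_nonneg _) _)),
      ← ENNReal.ofReal_mul hC']
    congr 1
    have habs : |f s| ^ (p-1) * |f s| = |f s| ^ p := by
      rcases eq_or_lt_of_le (abs_nonneg (f s)) with h | h
      · rw [← h, Real.zero_rpow (by linarith : p - 1 ≠ 0),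
          Real.zero_rpow (by linarith : p ≠ 0), zero_mul]
      · rw [← Real.rpow_add_one (ne_of_gt h) (p-1), show p-1+1 = p by ring]
    calc 2^p * p/(p-1) * |f s| ^ (p-1) * (|f s| * η s)
        = 2^p * p/(p-1) * ((|f s| ^ (p-1) * |f s|) * η s) := by ring
      _ = 2^p * p/(p-1) * (|f s| ^ p * η s) := by rw [habs]
  rw [lintegral_congr hinner]
  rw [lintegral_const_mul' _ _ ENNReal.ofReal_ne_top]

end Nice

/-- Lemma 6, strong type (p,p). Let `1 < p < ∞`. There is a constant
`C > 0`, depending only on `p`, such that for every radial weight `η` and every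
`f ∈ L^p((0,1), η ds)` one has `∫_0^1 (M_η f)^p η dt ≤ C ∫_0^1 |f|^p η dt`. -/
theorem maximal_strong_type (p : ℝ) (hp : 1 < p) :
    ∃ C > (0:ℝ), ∀ η : ℝ → ℝ, IsRadialWeight η →
      ∀ f : ℝ → ℝ, Measurable f →
        (∫⁻ t in Set.Ioo (0:ℝ) 1, ENNReal.ofReal (|f t| ^ p * η t)) < ⊤ →
        (∫⁻ t in Set.Ioo (0:ℝ) 1, Mone η f t ^ p * ENNReal.ofReal (η t)) ≤
          ENNReal.ofReal C * ∫⁻ t in Set.Ioo (0:ℝ) 1, ENNReal.ofReal (|f t| ^ p * η t) := by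
  refine ⟨2^p * p / (p-1), ?_, ?_⟩
  · apply div_pos _ (by linarith)
    have := Real.rpow_pos_of_pos (by norm_num : (0:ℝ) < 2) p
    nlinarith
  rintro η ⟨hnn, hintOn, hpos⟩ f hf _hfin
  have haem := hintOn.aemeasurable
  set η₀ : ℝ → ℝ := haem.mk _ with hη₀
  have hη₀m : Measurable η₀ := haem.measurable_mk
  have hη₀e : η =ᵐ[volume.restrict (Set.Ico (0:ℝ) 1)] η₀ := haem.ae_eq_mk
  set η' : ℝ → ℝ := fun s => if s ∈ Set.Ico (0:ℝ) 1 then max (η₀ s) 0 else 0 with hη'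
  have hη'm : Measurable η' :=
    Measurable.ite measurableSet_Ico (hη₀m.max measurable_const) measurable_const
  have h0' : ∀ s, 0 ≤ η' s := by
    intro s
    show 0 ≤ if s ∈ Set.Ico (0:ℝ) 1 then max (η₀ s) 0 else 0
    split_ifs with h
    · exact le_max_right _ _
    · exact le_rfl
  have hae : η' =ᵐ[volume.restrict (Set.Ico (0:ℝ) 1)] η := by
    filter_upwards [hη₀e, ae_restrict_mem measurableSet_Ico] with s hs hmem
    show (if s ∈ Set.Ico (0:ℝ) 1 then max (η₀ s) 0 else 0) = η s
    rw [if_pos hmem, ← hs, max_eq_left (hnn s hmem)]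
  have hint'On : IntegrableOn η' (Set.Ico (0:ℝ) 1) := hintOn.congr hae.symm
  have hint' : Integrable η' := by
    have hind : η' = Set.indicator (Set.Ico (0:ℝ) 1) η' := by
      funext s
      by_cases h : s ∈ Set.Ico (0:ℝ) 1
      · rw [Set.indicator_of_mem h]
      · rw [Set.indicator_of_notMem h]
        show (if s ∈ Set.Ico (0:ℝ) 1 then max (η₀ s) 0 else 0) = 0
        rw [if_neg h]
    rw [hind]
    exact (integrable_indicator_iff measurableSet_Ico).2 hint'On
  have haeIoo : ∀ b : ℝ, 0 ≤ b → η' =ᵐ[volume.restrict (Set.Ioo b 1)] η := by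
    intro b hb
    exact ae_restrict_of_ae_restrict_of_subset
      (show Set.Ioo b 1 ⊆ Set.Ico 0 1 from fun x hx => ⟨le_trans hb hx.1.le, hx.2⟩) hae
  have hhatw : ∀ b : ℝ, 0 ≤ b → hatw η' b = hatw η b := by
    intro b hb
    exact integral_congr_ae (haeIoo b hb)
  have hpos' : ∀ r ∈ Set.Ico (0:ℝ) 1, 0 < hatw η' r := by
    intro r hr
    rw [hhatw r hr.1]
    exact hpos r hr
  have hnum : ∀ b : ℝ, 0 ≤ b → ∀ g : ℝ → ℝ,
      (∫⁻ s in Set.Ioo b 1, ENNReal.ofReal (|g s| * η' s))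
        = ∫⁻ s in Set.Ioo b 1, ENNReal.ofReal (|g s| * η s) := by
    intro b hb g
    refine lintegral_congr_ae ?_
    filter_upwards [haeIoo b hb] with s hs
    rw [hs]
  have hMone : ∀ g : ℝ → ℝ, ∀ t : ℝ, Mone η' g t = Mone η g t := by
    intro g t
    simp only [Mone]
    refine iSup_congr fun b => ?_
    refine iSup_congr_Prop Iff.rfl fun hb => ?_
    rw [hnum b hb.1 g, hhatw b hb.1]
  have key := main_nice p hp η' hη'm h0' hint' hpos' f hf
  have hLHS : (∫⁻ t in Set.Ioo (0:ℝ) 1, Mone η f t ^ p * ENNReal.ofReal (η t))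
      = ∫⁻ t in Set.Ioo (0:ℝ) 1, Mone η' f t ^ p * ENNReal.ofReal (η' t) := by
    refine lintegral_congr_ae ?_
    have h1 : η' =ᵐ[volume.restrict (Set.Ioo (0:ℝ) 1)] η :=
      ae_restrict_of_ae_restrict_of_subset
        (show Set.Ioo (0:ℝ) 1 ⊆ Set.Ico 0 1 from fun x hx => ⟨hx.1.le, hx.2⟩) hae
    filter_upwards [h1] with t ht
    rw [ht, hMone f t]
  have hRHS : (∫⁻ t in Set.Ioo (0:ℝ) 1, ENNReal.ofReal (|f t| ^ p * η t))
      = ∫⁻ t in Set.Ioo (0:ℝ) 1, ENNReal.ofReal (|f t| ^ p * η' t) := by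
    refine lintegral_congr_ae ?_
    have h1 : η' =ᵐ[volume.restrict (Set.Ioo (0:ℝ) 1)] η :=
      ae_restrict_of_ae_restrict_of_subset
        (show Set.Ioo (0:ℝ) 1 ⊆ Set.Ico 0 1 from fun x hx => ⟨hx.1.le, hx.2⟩) hae
    filter_upwards [h1] with t ht
    rw [ht]
  rw [hLHS, hRHS]
  exact key

end
end
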